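/- arXiv:1711.07795 — 11 statements merged into one kernel-verified Lean document; each statement's English description precedes it below -/
import Mathlib

section
/- Let X and Y be nonsingular BV algebras and let α : X → Y be a canonical map with logarithmic Jacobian r_α. Then r_α satisfies the quantum master equation Δ_Y r_α + (1/2)(r_α, r_α)_Y = 0. -/
/-!
Common setup: real unital ℤ-graded (graded-)commutative algebras, BV Laplacians,
BV brackets, BV algebra structures, canonical maps and master actions.
-/

/-- Graded commutativity with Koszul signs: `f * g = (-1)^{|f||g|} g * f`
for homogeneous `f`, `g`. -/
def GradedComm {X : Type*} [Ring X] [Algebra ℝ X] (𝒜 : ℤ → Submodule ℝ X) : Prop :=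
  ∀ (i j : ℤ) (f g : X), f ∈ 𝒜 i → g ∈ 𝒜 j → f * g = ((-1 : ℝ) ^ (i * j)) • (g * f)

/-- `D` is a BV Laplacian on the ℤ-graded algebra `X` with grading `𝒜`:
it raises degree by `1`, is a second-order differential operator
(seven-term identity on homogeneous elements), squares to zero and kills `1`. -/
def IsBVLaplacian {X : Type*} [Ring X] [Algebra ℝ X]
    (𝒜 : ℤ → Submodule ℝ X) (D : X →ₗ[ℝ] X) : Prop :=
  (∀ (i : ℤ) (f : X), f ∈ 𝒜 i → D f ∈ 𝒜 (i + 1)) ∧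
  (∀ (i j k : ℤ) (f g h : X), f ∈ 𝒜 i → g ∈ 𝒜 j → h ∈ 𝒜 k →
    D (f * g * h) =
      -(D f * g * h) - ((-1 : ℝ) ^ i) • (f * D g * h)
        - ((-1 : ℝ) ^ (i + j)) • (f * g * D h)
        + D (f * g) * h + ((-1 : ℝ) ^ ((i + 1) * j)) • (g * D (f * h))
        + ((-1 : ℝ) ^ i) • (f * D (g * h))) ∧
  (∀ f : X, D (D f) = 0) ∧
  D 1 = 0

/-- `Br` is the BV bracket associated with the Laplacian `D`: it is the bilinear
map given on homogeneous `f`, `g` by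
`(f,g) = (-1)^{|f|} (D(fg) - (Df)g - (-1)^{|f|} f(Dg))`. -/
def IsBVBracketOf {X : Type*} [Ring X] [Algebra ℝ X]
    (𝒜 : ℤ → Submodule ℝ X) (D : X →ₗ[ℝ] X) (Br : X →ₗ[ℝ] X →ₗ[ℝ] X) : Prop :=
  ∀ (i j : ℤ) (f g : X), f ∈ 𝒜 i → g ∈ 𝒜 j →
    Br f g = ((-1 : ℝ) ^ i) • (D (f * g) - D f * g - ((-1 : ℝ) ^ i) • (f * D g))

/-- A BV algebra structure on the ℤ-graded algebra `X` with grading `𝒜`: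
graded commutativity, a BV Laplacian `Δ` and its associated BV bracket. -/
structure BVAlgebraStr (X : Type*) [Ring X] [Algebra ℝ X]
    (𝒜 : ℤ → Submodule ℝ X) where
  grcomm : GradedComm 𝒜
  Δ : X →ₗ[ℝ] X
  isBVLaplacian : IsBVLaplacian 𝒜 Δ
  bracket : X →ₗ[ℝ] X →ₗ[ℝ] X
  isBracket : IsBVBracketOf 𝒜 Δ bracket

/-- The bracket `Br` is nonsingular: its center is exactly `ℝ·1`. -/
def IsNonsingularBracket {X : Type*} [Ring X] [Algebra ℝ X]
    (Br : X →ₗ[ℝ] X →ₗ[ℝ] X) : Prop :=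
  ∀ c : X, (∀ f : X, Br f c = 0) ↔ ∃ r : ℝ, c = algebraMap ℝ X r

/-- `α` is a canonical map with logarithmic Jacobian `r`: a degree-preserving
isomorphism of unital algebras with `Δ_Y(αf) - α(Δ_X f) + (r, αf)_Y = 0`,
where `r` has degree `0`. -/
def IsCanonicalWithJacobian {X Y : Type*} [Ring X] [Algebra ℝ X] [Ring Y] [Algebra ℝ Y]
    (𝒜 : ℤ → Submodule ℝ X) (ℬ : ℤ → Submodule ℝ Y)
    (ΔX : X →ₗ[ℝ] X) (ΔY : Y →ₗ[ℝ] Y) (BrY : Y →ₗ[ℝ] Y →ₗ[ℝ] Y)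
    (α : X ≃ₐ[ℝ] Y) (r : Y) : Prop :=
  (∀ (i : ℤ) (f : X), f ∈ 𝒜 i → α f ∈ ℬ i) ∧ r ∈ ℬ 0 ∧
  (∀ f : X, ΔY (α f) - α (ΔX f) + BrY r (α f) = 0)

/-- `ξ` is an infinitesimal canonical map with logarithmic Jacobian `e`:
a degree-`0` derivation with `Δ(ξf) - ξ(Δf) + (e, f) = 0`, `e` of degree `0`. -/
def IsInfCanonicalWithJacobian {X : Type*} [Ring X] [Algebra ℝ X]
    {𝒜 : ℤ → Submodule ℝ X} (B : BVAlgebraStr X 𝒜)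
    (ξ : X →ₗ[ℝ] X) (e : X) : Prop :=
  (∀ (i : ℤ) (f : X), f ∈ 𝒜 i → ξ f ∈ 𝒜 i) ∧
  (∀ f g : X, ξ (f * g) = ξ f * g + f * ξ g) ∧
  e ∈ 𝒜 0 ∧
  (∀ f : X, B.Δ (ξ f) - ξ (B.Δ f) + B.bracket e f = 0)

/-- `S` is a BV quantum master action: a degree-`0` element satisfying the
quantum master equation `ΔS + (1/2)(S,S) = 0`. -/
def IsMasterAction {X : Type*} [Ring X] [Algebra ℝ X]
    {𝒜 : ℤ → Submodule ℝ X} (B : BVAlgebraStr X 𝒜) (S : X) : Prop :=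
  S ∈ 𝒜 0 ∧ B.Δ S + (1 / 2 : ℝ) • B.bracket S S = 0
section Aux
variable {Y : Type*} [Ring Y] [Algebra ℝ Y]
variable {ℬ : ℤ → Submodule ℝ Y} [GradedAlgebra ℬ] {D : Y →ₗ[ℝ] Y} {Br : Y →ₗ[ℝ] Y →ₗ[ℝ] Y}

lemma auxDbr (hLap : IsBVLaplacian ℬ D) (hbr : IsBVBracketOf ℬ D Br)
    {r : Y} (hr : r ∈ ℬ 0) {j : ℤ} {b : Y} (hb : b ∈ ℬ j) :
    D (Br r b) = Br (D r) b - Br r (D b) := by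
  have hDr : D r ∈ ℬ 1 := by simpa using hLap.1 0 r hr
  have hDb : D b ∈ ℬ (j+1) := hLap.1 j b hb
  have hDD := hLap.2.2.1
  rw [hbr 0 j r b hr hb, hbr 1 j (D r) b hDr hb, hbr 0 (j+1) r (D b) hr hDb]
  simp only [zpow_zero, zpow_one, one_smul, neg_one_smul, map_sub, map_neg, hDD,
    mul_zero, zero_mul, sub_zero, zero_sub, map_zero]
  abel

end Aux
section Aux2
variable {Y : Type*} [Ring Y] [Algebra ℝ Y]
variable {ℬ : ℤ → Submodule ℝ Y} [GradedAlgebra ℬ] {D : Y →ₗ[ℝ] Y} {Br : Y →ₗ[ℝ] Y →ₗ[ℝ] Y}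

lemma auxDrDr (grc : GradedComm ℬ) (hLap : IsBVLaplacian ℬ D)
    {r : Y} (hr : r ∈ ℬ 0) : D r * D r = 0 := by
  have hDr : D r ∈ ℬ 1 := by simpa using hLap.1 0 r hr
  have h := grc 1 1 (D r) (D r) hDr hDr
  have h2 : D r * D r + D r * D r = 0 := by
    nth_rewrite 2 [h]
    norm_num
  have h3 : (2:ℝ) • (D r * D r) = 0 := by rw [two_smul]; exact h2
  have := smul_eq_zero.mp h3
  simpa using this.resolve_left (by norm_num)

lemma auxrDr (grc : GradedComm ℬ) (hLap : IsBVLaplacian ℬ D)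
    {r : Y} (hr : r ∈ ℬ 0) : r * D r = D r * r := by
  have hDr : D r ∈ ℬ 1 := by simpa using hLap.1 0 r hr
  have h := grc 0 1 r (D r) hr hDr
  simpa using h

lemma auxL0 (grc : GradedComm ℬ) (hLap : IsBVLaplacian ℬ D) (hbr : IsBVBracketOf ℬ D Br)
    {r : Y} (hr : r ∈ ℬ 0) {k : ℤ} {c : Y} (hc : c ∈ ℬ k) :
    Br r (r * c) = Br r r * c + r * Br r c := by
  have hrc : r * c ∈ ℬ k := by simpa using SetLike.mul_mem_graded hr hc
  have h7 := hLap.2.1 0 0 k r r c hr hr hc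
  have hrDr := auxrDr grc hLap hr
  rw [hbr 0 k r (r*c) hr hrc, hbr 0 0 r r hr hr, hbr 0 k r c hr hc]
  simp only [zpow_zero, one_smul] at h7 ⊢
  norm_num at h7 ⊢
  rw [show r * (r * c) = r * r * c from (mul_assoc r r c).symm, h7]
  simp only [mul_sub, sub_mul, mul_add, add_mul, ← mul_assoc, hrDr]
  abel

end Aux2
section Aux3
set_option linter.unusedSectionVars false
variable {Y : Type*} [Ring Y] [Algebra ℝ Y]
variable {ℬ : ℤ → Submodule ℝ Y} [GradedAlgebra ℬ] {D : Y →ₗ[ℝ] Y} {Br : Y →ₗ[ℝ] Y →ₗ[ℝ] Y}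

lemma auxL1 (grc : GradedComm ℬ) (hLap : IsBVLaplacian ℬ D) (hbr : IsBVBracketOf ℬ D Br)
    {r : Y} (hr : r ∈ ℬ 0) {k : ℤ} {c : Y} (hc : c ∈ ℬ k) :
    Br r (D r * c) = Br r (D r) * c - D r * Br r c := by
  have hDr : D r ∈ ℬ 1 := by simpa using hLap.1 0 r hr
  have hDrc : D r * c ∈ ℬ (1 + k) := SetLike.mul_mem_graded hDr hc
  have h7 := hLap.2.1 0 1 k r (D r) c hr hDr hc
  have hrDr := auxrDr grc hLap hr
  have hDrDr := auxDrDr grc hLap hr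
  have hDD := hLap.2.2.1
  rw [hbr 0 (1+k) r (D r * c) hr hDrc, hbr 0 1 r (D r) hr hDr, hbr 0 k r c hr hc]
  norm_num [hDD] at h7 ⊢
  rw [show r * (D r * c) = r * D r * c from (mul_assoc _ _ _).symm, h7]
  simp only [mul_sub, sub_mul, mul_add, add_mul, ← mul_assoc, hrDr, hDrDr, zero_mul]
  abel

lemma auxL2 (grc : GradedComm ℬ) (hLap : IsBVLaplacian ℬ D) (hbr : IsBVBracketOf ℬ D Br)
    {r : Y} (hr : r ∈ ℬ 0) {k : ℤ} {c : Y} (hc : c ∈ ℬ k) :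
    Br (D r) (r * c) = Br (D r) r * c + r * Br (D r) c := by
  have hDr : D r ∈ ℬ 1 := by simpa using hLap.1 0 r hr
  have hrc : r * c ∈ ℬ k := by simpa using SetLike.mul_mem_graded hr hc
  have h7 := hLap.2.1 1 0 k (D r) r c hDr hr hc
  have hrDr := auxrDr grc hLap hr
  have hDrDr := auxDrDr grc hLap hr
  have hDD := hLap.2.2.1
  rw [hbr 1 k (D r) (r*c) hDr hrc, hbr 1 0 (D r) r hDr hr, hbr 1 k (D r) c hDr hc]
  norm_num [hDD] at h7 ⊢
  rw [show D r * (r * c) = D r * r * c from (mul_assoc _ _ _).symm, h7]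
  simp only [mul_sub, sub_mul, mul_add, add_mul, ← mul_assoc, hrDr, hDrDr, zero_mul,
    neg_one_smul, smul_mul_assoc, mul_smul_comm, mul_neg, neg_mul, mul_zero]
  abel

end Aux3
section Aux4
set_option linter.unusedSectionVars false
variable {Y : Type*} [Ring Y] [Algebra ℝ Y]
variable {ℬ : ℤ → Submodule ℝ Y} [GradedAlgebra ℬ] {D : Y →ₗ[ℝ] Y} {Br : Y →ₗ[ℝ] Y →ₗ[ℝ] Y}

lemma auxBrrr_mem (hLap : IsBVLaplacian ℬ D) (hbr : IsBVBracketOf ℬ D Br)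
    {r : Y} (hr : r ∈ ℬ 0) : Br r r ∈ ℬ 1 := by
  have hDr : D r ∈ ℬ 1 := by simpa using hLap.1 0 r hr
  rw [hbr 0 0 r r hr hr]
  norm_num
  have h1 : D (r * r) ∈ ℬ 1 := by
    simpa using hLap.1 0 (r*r) (by simpa using SetLike.mul_mem_graded hr hr)
  have h2 : D r * r ∈ ℬ 1 := by simpa using SetLike.mul_mem_graded hDr hr
  have h3 : r * D r ∈ ℬ 1 := by simpa using SetLike.mul_mem_graded hr hDr
  exact sub_mem (sub_mem h1 h2) h3

lemma auxKey (grc : GradedComm ℬ) (hLap : IsBVLaplacian ℬ D) (hbr : IsBVBracketOf ℬ D Br)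
    {r : Y} (hr : r ∈ ℬ 0) {i : ℤ} {y : Y} (hy : y ∈ ℬ i) :
    (2:ℝ) • Br r (Br r y) = Br (Br r r) y := by
  have hDr : D r ∈ ℬ 1 := by simpa using hLap.1 0 r hr
  have hDy : D y ∈ ℬ (i+1) := hLap.1 i y hy
  have hry : r * y ∈ ℬ i := by simpa using SetLike.mul_mem_graded hr hy
  have hBrrr : Br r r ∈ ℬ 1 := auxBrrr_mem hLap hbr hr
  have hA : Br r y = D (r * y) - D r * y - r * D y := by
    rw [hbr 0 i r y hr hy]; norm_num
  have hAmem : Br r y ∈ ℬ (i+1) := by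
    rw [hA]
    have h1 : D (r * y) ∈ ℬ (i+1) := hLap.1 i (r*y) hry
    have h2 : D r * y ∈ ℬ (i+1) := by
      have := SetLike.mul_mem_graded hDr hy; rwa [add_comm] at this
    have h3 : r * D y ∈ ℬ (i+1) := by simpa using SetLike.mul_mem_graded hr hDy
    exact sub_mem (sub_mem h1 h2) h3
  -- E1 : linearity
  have E1 : Br r (Br r y) = Br r (D (r*y)) - Br r (D r * y) - Br r (r * D y) := by
    rw [hA]; simp [map_sub]
  -- E2 from Dbr at r*y
  have E2 : Br r (D (r*y)) = Br (D r) (r*y) - D (Br r (r*y)) := by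
    have h := auxDbr hLap hbr hr hry
    rw [h]; abel
  have E3 : Br (D r) (r*y) = Br (D r) r * y + r * Br (D r) y := auxL2 grc hLap hbr hr hy
  have E4 : Br r (r*y) = Br r r * y + r * Br r y := auxL0 grc hLap hbr hr hy
  have E5 : Br r (D r * y) = Br r (D r) * y - D r * Br r y := auxL1 grc hLap hbr hr hy
  have E6 : Br r (r * D y) = Br r r * D y + r * Br r (D y) := auxL0 grc hLap hbr hr hDy
  -- E7 : D (r * Br r y) = Br r (Br r y) + D r * Br r y + r * D (Br r y)
  have E7 : D (r * Br r y) = Br r (Br r y) + D r * Br r y + r * D (Br r y) := by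
    have h := hbr 0 (i+1) r (Br r y) hr hAmem
    norm_num at h
    rw [h]; abel
  -- E8 : D (Br r y) = Br (D r) y - Br r (D y)
  have E8 : D (Br r y) = Br (D r) y - Br r (D y) := auxDbr hLap hbr hr hy
  -- E9 : D (Br r r) = Br (D r) r - Br r (D r)
  have E9 : D (Br r r) = Br (D r) r - Br r (D r) := auxDbr hLap hbr hr hr
  -- assemble
  have hBig : Br r (Br r y) + Br r (Br r y) =
      D (Br r r) * y - D (Br r r * y) - Br r r * D y := by
    calc Br r (Br r y) + Br r (Br r y)
        = Br r (Br r y) + (Br r (D (r*y)) - Br r (D r * y) - Br r (r * D y)) := by rw [← E1]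
      _ = Br r (Br r y) + ((Br (D r) r * y + r * Br (D r) y - D (Br r r * y + r * Br r y))
            - (Br r (D r) * y - D r * Br r y) - (Br r r * D y + r * Br r (D y))) := by
            rw [E2, E3, E4, E5, E6]
      _ = Br r (Br r y) + ((Br (D r) r - Br r (D r)) * y + r * (Br (D r) y - Br r (D y))
            - D (Br r r * y) - D (r * Br r y) + D r * Br r y - Br r r * D y) := by
            rw [map_add D (Br r r * y) (r * Br r y)]
            simp only [sub_mul, mul_sub]
            abel
      _ = Br r (Br r y) + (D (Br r r) * y + r * D (Br r y)
            - D (Br r r * y) - (Br r (Br r y) + D r * Br r y + r * D (Br r y))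
            + D r * Br r y - Br r r * D y) := by rw [E7, E8, E9]
      _ = D (Br r r) * y - D (Br r r * y) - Br r r * D y := by abel
  have hRHS : Br (Br r r) y = D (Br r r) * y - D (Br r r * y) - Br r r * D y := by
    rw [hbr 1 i (Br r r) y hBrrr hy]
    norm_num
    abel
  rw [two_smul, hBig, hRHS]

end Aux4
section Aux5
set_option linter.unusedSectionVars false
variable {Y : Type*} [Ring Y] [Algebra ℝ Y]
variable {ℬ : ℤ → Submodule ℝ Y} [GradedAlgebra ℬ] {D : Y →ₗ[ℝ] Y} {Br : Y →ₗ[ℝ] Y →ₗ[ℝ] Y}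

lemma auxSymm (grc : GradedComm ℬ) (hLap : IsBVLaplacian ℬ D) (hbr : IsBVBracketOf ℬ D Br)
    {j : ℤ} {g T : Y} (hg : g ∈ ℬ j) (hT : T ∈ ℬ 1) :
    Br g T = -(Br T g) := by
  have hDg : D g ∈ ℬ (j+1) := hLap.1 j g hg
  have hDT : D T ∈ ℬ 2 := hLap.1 1 T hT
  have hne : (-1:ℝ) ≠ 0 := by norm_num
  have hgT : g * T = ((-1:ℝ)^j) • (T * g) := by simpa using grc j 1 g T hg hT
  have hDgT : D g * T = -(((-1:ℝ)^j) • (T * D g)) := by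
    have := grc (j+1) 1 (D g) T hDg hT
    rw [this, show ((j:ℤ)+1)*1 = j + 1 by ring, zpow_add₀ hne, zpow_one, mul_neg_one, neg_smul]
  have hgDT : g * D T = D T * g := by
    have := grc j 2 g (D T) hg hDT
    rw [this, show (j:ℤ)*2 = j + j by ring]
    rw [Even.neg_one_zpow ⟨j, rfl⟩, one_smul]
  have hss : ((-1:ℝ)^j) * ((-1:ℝ)^j) = 1 := by
    rw [← zpow_add₀ hne]; exact Even.neg_one_zpow ⟨j, rfl⟩
  rw [hbr j 1 g T hg hT, hbr 1 j T g hT hg, hgT, hgDT, hDgT]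
  simp only [map_smul, zpow_one, neg_one_smul, smul_sub, smul_neg, smul_smul, hss, one_smul]
  abel

end Aux5

/-- the logarithmic Jacobian of a canonical map satisfies the
quantum master equation. -/
theorem stmt2 {X Y : Type*} [Ring X] [Algebra ℝ X] [Ring Y] [Algebra ℝ Y]
    (𝒜 : ℤ → Submodule ℝ X) [GradedAlgebra 𝒜]
    (ℬ : ℤ → Submodule ℝ Y) [GradedAlgebra ℬ]
    (BX : BVAlgebraStr X 𝒜) (BY : BVAlgebraStr Y ℬ)
    (hX : IsNonsingularBracket BX.bracket) (hY : IsNonsingularBracket BY.bracket)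
    (α : X ≃ₐ[ℝ] Y) (r : Y)
    (hcan : IsCanonicalWithJacobian 𝒜 ℬ BX.Δ BY.Δ BY.bracket α r) :
    BY.Δ r + (1 / 2 : ℝ) • BY.bracket r r = 0 := by
  classical
  obtain ⟨hdeg, hr0, hrel⟩ := hcan
  have grc := BY.grcomm
  have hLap := BY.isBVLaplacian
  have hbr := BY.isBracket
  have hDr : BY.Δ r ∈ ℬ 1 := by simpa using hLap.1 0 r hr0
  have hBrrr : BY.bracket r r ∈ ℬ 1 := auxBrrr_mem hLap hbr hr0
  set T := BY.Δ r + (1 / 2 : ℝ) • BY.bracket r r with hTdef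
  have hT1 : T ∈ ℬ 1 := add_mem hDr (Submodule.smul_mem _ _ hBrrr)
  -- core computation on homogeneous elements
  have core : ∀ (i : ℤ) (f : X), f ∈ 𝒜 i → BY.bracket T (α f) = 0 := by
    intro i f hf
    have hy : (α f : Y) ∈ ℬ i := hdeg i f hf
    have rel1 : α (BX.Δ f) = BY.Δ (α f) + BY.bracket r (α f) := by
      have h := hrel f
      rw [sub_add_eq_add_sub, sub_eq_zero] at h
      exact h.symm
    have rel2 := hrel (BX.Δ f)
    rw [BX.isBVLaplacian.2.2.1 f, map_zero, sub_zero, rel1, map_add, map_add,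
      hLap.2.2.1 (α f), zero_add] at rel2
    -- rel2 : D (Br r y) + (Br r (D y) + Br r (Br r y)) = 0
    have E8 := auxDbr hLap hbr hr0 hy
    have key := auxKey grc hLap hbr hr0 hy
    have hTexp : BY.bracket T (α f)
        = BY.bracket (BY.Δ r) (α f) + (1/2:ℝ) • BY.bracket (BY.bracket r r) (α f) := by
      rw [hTdef]
      simp [map_add, map_smul, LinearMap.add_apply, LinearMap.smul_apply]
    rw [hTexp, ← key, smul_smul]
    norm_num
    -- goal : Br Dr y + Br r (Br r y) = 0
    rw [E8] at rel2
    have hre : BY.bracket (BY.Δ r) (α f) + BY.bracket r (BY.bracket r (α f))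
        = BY.bracket (BY.Δ r) (α f) - BY.bracket r (BY.Δ (α f))
          + (BY.bracket r (BY.Δ (α f)) + BY.bracket r (BY.bracket r (α f))) := by abel
    rw [hre, rel2]
  have coreAll : ∀ x : X, BY.bracket T (α x) = 0 := by
    intro x
    have hx := DirectSum.sum_support_decompose 𝒜 x
    conv_lhs => rw [← hx]
    rw [map_sum, map_sum]
    exact Finset.sum_eq_zero fun i _ => core i _ (SetLike.coe_mem _)
  have allT : ∀ g : Y, BY.bracket T g = 0 := by
    intro g
    have h := coreAll (α.symm g)
    simpa using h
  have center : ∀ g : Y, BY.bracket g T = 0 := by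
    intro g
    have hgdec := DirectSum.sum_support_decompose ℬ g
    conv_lhs => rw [← hgdec]
    rw [map_sum, LinearMap.sum_apply]
    refine Finset.sum_eq_zero fun i _ => ?_
    rw [auxSymm grc hLap hbr (SetLike.coe_mem _) hT1, allT, neg_zero]
  obtain ⟨c, hc⟩ := (hY T).mp center
  have hT0 : T ∈ ℬ 0 := by rw [hc]; exact SetLike.algebraMap_mem_graded ℬ c
  have h01 := DirectSum.decompose_of_mem_same ℬ hT0
  have h02 := DirectSum.decompose_of_mem_ne ℬ hT1 (by norm_num : (1:ℤ) ≠ 0)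
  rw [← h01, h02]
end

section
/- Let X and Y be nonsingular BV algebras and let α : X → Y be a canonical map. Then α preserves BV brackets: α((f,g)_X) = (αf, αg)_Y for all f, g ∈ X. -/
section Aux

private lemma neg_one_zpow_sq (i : ℤ) : ((-1:ℝ)^i) * ((-1:ℝ)^i) = 1 := by
  rw [← zpow_add₀ (by norm_num : (-1:ℝ) ≠ 0), show i + i = 2 * i by ring, zpow_mul]
  norm_num

/-- Leibniz rule for the BV bracket with a degree-0 element in the first slot. -/
private lemma bracket_leibniz {Y : Type*} [Ring Y] [Algebra ℝ Y]
    (ℬ : ℤ → Submodule ℝ Y) [GradedAlgebra ℬ] (BY : BVAlgebraStr Y ℬ) (r : Y) (hr : r ∈ ℬ 0)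
    (i j : ℤ) (F G : Y) (hF : F ∈ ℬ i) (hG : G ∈ ℬ j) :
    BY.bracket r (F * G)
      = BY.bracket r F * G + ((-1:ℝ)^i) • (F * BY.bracket r G) := by
  have hFG : F * G ∈ ℬ (i + j) := SetLike.mul_mem_graded hF hG
  have hDr : BY.Δ r ∈ ℬ 1 := by
    have := BY.isBVLaplacian.1 0 r hr
    simpa using this
  have hbr1 := BY.isBracket 0 i r F hr hF
  have hbr2 := BY.isBracket 0 j r G hr hG
  have hbr3 := BY.isBracket 0 (i + j) r (F * G) hr hFG
  simp only [zpow_zero, one_smul] at hbr1 hbr2 hbr3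
  have hst := BY.isBVLaplacian.2.1 0 i j r F G hr hF hG
  simp only [zpow_zero, one_smul, zero_add, one_mul] at hst
  -- graded commutativity facts
  have hc1 : F * BY.Δ r = ((-1:ℝ)^i) • (BY.Δ r * F) := by
    have := BY.grcomm i 1 F (BY.Δ r) hF hDr
    simpa using this
  have hc2 : F * r = r * F := by
    have := BY.grcomm i 0 F r hF hr
    simpa using this
  have hε := neg_one_zpow_sq i
  rw [hbr1, hbr2, hbr3, ← mul_assoc, hst]
  simp only [mul_sub, mul_add, sub_mul, add_mul, smul_sub, smul_add,
    mul_smul_comm, smul_mul_assoc, smul_smul, hε, one_smul, mul_assoc]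
  rw [show F * (BY.Δ r * G) = (F * BY.Δ r) * G by rw [mul_assoc],
    show F * (r * BY.Δ G) = (F * r) * BY.Δ G by rw [mul_assoc], hc1, hc2]
  simp only [smul_mul_assoc, smul_smul, hε, one_smul, mul_assoc]
  abel

end Aux

/-- canonical maps preserve BV brackets. -/
theorem stmt3 {X Y : Type*} [Ring X] [Algebra ℝ X] [Ring Y] [Algebra ℝ Y]
    (𝒜 : ℤ → Submodule ℝ X) [GradedAlgebra 𝒜]
    (ℬ : ℤ → Submodule ℝ Y) [GradedAlgebra ℬ]
    (BX : BVAlgebraStr X 𝒜) (BY : BVAlgebraStr Y ℬ)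
    (hX : IsNonsingularBracket BX.bracket) (hY : IsNonsingularBracket BY.bracket)
    (α : X ≃ₐ[ℝ] Y) (r : Y)
    (hcan : IsCanonicalWithJacobian 𝒜 ℬ BX.Δ BY.Δ BY.bracket α r) :
    ∀ f g : X, α (BX.bracket f g) = BY.bracket (α f) (α g) := by
  obtain ⟨hdeg, hr0, hmaster⟩ := hcan
  have key : ∀ h : X, α (BX.Δ h) = BY.Δ (α h) + BY.bracket r (α h) := by
    intro h
    have h0 := hmaster h
    rw [sub_add_eq_add_sub, sub_eq_zero] at h0
    exact h0.symm
  -- homogeneous case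
  have homog : ∀ (i j : ℤ) (f g : X), f ∈ 𝒜 i → g ∈ 𝒜 j →
      α (BX.bracket f g) = BY.bracket (α f) (α g) := by
    intro i j f g hf hg
    have hF : α f ∈ ℬ i := hdeg i f hf
    have hG : α g ∈ ℬ j := hdeg j g hg
    have hfg : f * g ∈ 𝒜 (i + j) := SetLike.mul_mem_graded hf hg
    rw [BX.isBracket i j f g hf hg, BY.isBracket i j (α f) (α g) hF hG]
    simp only [map_smul, map_sub, map_mul, key]
    rw [bracket_leibniz ℬ BY r hr0 i j (α f) (α g) hF hG]
    have hε := neg_one_zpow_sq i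
    simp only [smul_sub, smul_add, sub_mul, add_mul, mul_add, mul_sub,
      mul_smul_comm, smul_mul_assoc, smul_smul, hε, one_smul]
    abel
  intro f g
  induction f using DirectSum.Decomposition.inductionOn 𝒜 with
  | zero => simp
  | homogeneous f' =>
    obtain ⟨f, hf⟩ := f'
    induction g using DirectSum.Decomposition.inductionOn 𝒜 with
    | zero => simp
    | homogeneous g' =>
      obtain ⟨g, hg⟩ := g'
      exact homog _ _ f g hf hg
    | add g1 g2 ih1 ih2 => simp only [map_add, ih1, ih2]
  | add f1 f2 ih1 ih2 =>
    simp only [map_add, LinearMap.add_apply, ih1, ih2]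
end

section
/- Let X and Y be nonsingular BV algebras and let α : X → Y be a canonical map with logarithmic Jacobian r_α. Then the inverse α⁻¹ : Y → X is a canonical map, and −α⁻¹(r_α) is a logarithmic Jacobian for α⁻¹. -/
section Aux

lemma bv_neg_one_sq (i : ℤ) : ((-1 : ℝ) ^ i) * ((-1 : ℝ) ^ i) = 1 := by
  rw [← mul_zpow]; norm_num

/-- Leibniz rule for the bracket with a degree-0 element. -/
lemma bv_leibniz0 {Y : Type*} [Ring Y] [Algebra ℝ Y]
    {ℬ : ℤ → Submodule ℝ Y} (B : BVAlgebraStr Y ℬ)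
    {i j : ℤ} {r f g : Y} (hr : r ∈ ℬ 0) (hf : f ∈ ℬ i) (hg : g ∈ ℬ j)
    (hfg : f * g ∈ ℬ (i + j)) :
    B.bracket r (f * g) =
      B.bracket r f * g + ((-1 : ℝ) ^ i) • (f * B.bracket r g) := by
  obtain ⟨hdeg, h7, _, _⟩ := B.isBVLaplacian
  have e1 := B.isBracket 0 (i + j) r (f * g) hr hfg
  have e2 := B.isBracket 0 i r f hr hf
  have e3 := B.isBracket 0 j r g hr hg
  have e7 := h7 0 i j r f g hr hf hg
  have hDr : B.Δ r ∈ ℬ 1 := by simpa using hdeg 0 r hr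
  have comm1 : f * B.Δ r = ((-1 : ℝ) ^ i) • (B.Δ r * f) := by
    simpa using B.grcomm i 1 f (B.Δ r) hf hDr
  have comm2 : f * r = r * f := by
    have := B.grcomm 0 i r f hr hf
    simpa using this.symm
  simp only [zpow_zero, one_smul, zero_add, one_mul] at e1 e2 e3 e7
  rw [e1, e2, e3, ← mul_assoc, e7]
  have hs := bv_neg_one_sq i
  simp only [mul_sub, sub_mul, mul_add, add_mul, smul_mul_assoc, mul_smul_comm,
    smul_sub, smul_add, smul_smul, mul_assoc]
  rw [show f * (B.Δ r * g) = (f * B.Δ r) * g from (mul_assoc f _ g).symm, comm1]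
  rw [show f * (r * B.Δ g) = (f * r) * B.Δ g from (mul_assoc f r _).symm, comm2]
  simp only [smul_mul_assoc, smul_smul, mul_assoc]
  match_scalars <;> first | ring1 | linear_combination hs | linear_combination -hs

end Aux

section Aux2

/-- Intertwining of brackets by a canonical map on homogeneous elements. -/
lemma bv_intertwine {X Y : Type*} [Ring X] [Algebra ℝ X] [Ring Y] [Algebra ℝ Y]
    {𝒜 : ℤ → Submodule ℝ X} [GradedAlgebra 𝒜] {ℬ : ℤ → Submodule ℝ Y} [GradedAlgebra ℬ]
    (BX : BVAlgebraStr X 𝒜) (BY : BVAlgebraStr Y ℬ) (α : X ≃ₐ[ℝ] Y) (r : Y)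
    (hcan : IsCanonicalWithJacobian 𝒜 ℬ BX.Δ BY.Δ BY.bracket α r)
    {i j : ℤ} {f g : X} (hf : f ∈ 𝒜 i) (hg : g ∈ 𝒜 j) :
    α (BX.bracket f g) = BY.bracket (α f) (α g) := by
  obtain ⟨hdeg, hr0, heq⟩ := hcan
  have hα : ∀ h : X, α (BX.Δ h) = BY.Δ (α h) + BY.bracket r (α h) := by
    intro h
    have H := heq h
    rw [sub_add_eq_add_sub, sub_eq_zero] at H
    exact H.symm
  have hF : α f ∈ ℬ i := hdeg i f hf
  have hG : α g ∈ ℬ j := hdeg j g hg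
  have eX := BX.isBracket i j f g hf hg
  have eY := BY.isBracket i j (α f) (α g) hF hG
  have eL := bv_leibniz0 BY hr0 hF hG (SetLike.mul_mem_graded hF hG)
  have hs := bv_neg_one_sq i
  rw [eX, eY]
  simp only [map_smul, map_sub, map_mul]
  rw [hα (f * g), hα f, hα g]
  simp only [map_mul]
  rw [eL]
  simp only [mul_sub, sub_mul, mul_add, add_mul, smul_mul_assoc, mul_smul_comm,
    smul_sub, smul_add, smul_smul, mul_assoc]
  match_scalars <;> first | ring1 | linear_combination hs | linear_combination -hs

/-- The inverse of a degree-preserving algebra isomorphism is degree-preserving. -/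
lemma bv_symm_mem {X Y : Type*} [Ring X] [Algebra ℝ X] [Ring Y] [Algebra ℝ Y]
    (𝒜 : ℤ → Submodule ℝ X) [GradedAlgebra 𝒜] (ℬ : ℤ → Submodule ℝ Y) [GradedAlgebra ℬ]
    (α : X ≃ₐ[ℝ] Y) (hdeg : ∀ (i : ℤ) (f : X), f ∈ 𝒜 i → α f ∈ ℬ i)
    {i : ℤ} {g : Y} (hg : g ∈ ℬ i) : α.symm g ∈ 𝒜 i := by
  classical
  set f := α.symm g with hfdef
  have hf : α f = g := α.apply_symm_apply g
  set S := (DirectSum.decompose 𝒜 f).support with hS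
  have hsum : ∑ k ∈ S, (DirectSum.decompose 𝒜 f k : X) = f :=
    DirectSum.sum_support_decompose 𝒜 f
  have key : ∀ j : ℤ, j ≠ i → (DirectSum.decompose 𝒜 f j : X) = 0 := by
    intro j hj
    by_cases hjS : j ∈ S
    · have h2 : (DirectSum.decompose ℬ g j : Y) = 0 :=
        DirectSum.decompose_of_mem_ne ℬ hg (Ne.symm hj)
      have hg' : g = ∑ k ∈ S, α (DirectSum.decompose 𝒜 f k : X) := by
        rw [← hf]
        conv_lhs => rw [← hsum]
        rw [map_sum]
      have h3 : (DirectSum.decompose ℬ g j : Y) = α (DirectSum.decompose 𝒜 f j : X) := by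
        rw [hg', DirectSum.decompose_sum, DFinsupp.finset_sum_apply,
          AddSubmonoidClass.coe_finset_sum]
        rw [Finset.sum_eq_single j (fun k _ hk =>
          DirectSum.decompose_of_mem_ne ℬ (hdeg _ _ (SetLike.coe_mem _)) hk)
          (fun h => absurd hjS h)]
        exact DirectSum.decompose_of_mem_same ℬ (hdeg _ _ (SetLike.coe_mem _))
      have h4 : α (DirectSum.decompose 𝒜 f j : X) = 0 := h3.symm.trans h2
      exact α.injective (by simpa using h4)
    · have := DFinsupp.notMem_support_iff.mp hjS
      rw [this]; rfl
  have hfi : ∑ k ∈ S, (DirectSum.decompose 𝒜 f k : X) = (DirectSum.decompose 𝒜 f i : X) :=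
    Finset.sum_eq_single i (fun k _ hk => key k hk)
      (fun h => by rw [DFinsupp.notMem_support_iff.mp h]; rfl)
  show f ∈ 𝒜 i
  rw [← hsum, hfi]
  exact SetLike.coe_mem _

end Aux2

/-- the inverse of a canonical map is canonical, with logarithmic
Jacobian `-α⁻¹(r_α)`. -/
theorem stmt5 {X Y : Type*} [Ring X] [Algebra ℝ X] [Ring Y] [Algebra ℝ Y]
    (𝒜 : ℤ → Submodule ℝ X) [GradedAlgebra 𝒜]
    (ℬ : ℤ → Submodule ℝ Y) [GradedAlgebra ℬ]
    (BX : BVAlgebraStr X 𝒜) (BY : BVAlgebraStr Y ℬ)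
    (hX : IsNonsingularBracket BX.bracket) (hY : IsNonsingularBracket BY.bracket)
    (α : X ≃ₐ[ℝ] Y) (r : Y)
    (hcan : IsCanonicalWithJacobian 𝒜 ℬ BX.Δ BY.Δ BY.bracket α r) :
    IsCanonicalWithJacobian ℬ 𝒜 BY.Δ BX.Δ BX.bracket α.symm (-(α.symm r)) := by
  obtain ⟨hdeg, hr0, heq⟩ := hcan
  have hsymm : ∀ (i : ℤ) (g : Y), g ∈ ℬ i → α.symm g ∈ 𝒜 i :=
    fun i g hg => bv_symm_mem 𝒜 ℬ α hdeg hg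
  have hc : α.symm r ∈ 𝒜 0 := hsymm 0 r hr0
  refine ⟨hsymm, neg_mem hc, ?_⟩
  have hint : ∀ h : X, α (BX.bracket (α.symm r) h) = BY.bracket r (α h) := by
    intro h
    induction h using DirectSum.Decomposition.inductionOn 𝒜 with
    | zero => simp
    | @homogeneous j m =>
      have := bv_intertwine BX BY α r ⟨hdeg, hr0, heq⟩ hc (SetLike.coe_mem m)
      rw [this, α.apply_symm_apply]
    | add a b ha hb => simp only [map_add, ha, hb]
  intro g
  have H := heq (α.symm g)
  rw [α.apply_symm_apply, sub_add_eq_add_sub, sub_eq_zero] at H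
  have hb : BX.bracket (-(α.symm r)) (α.symm g)
      = -(BX.bracket (α.symm r) (α.symm g)) := by
    rw [map_neg, LinearMap.neg_apply]
  rw [hb]
  apply α.injective
  simp only [map_add, map_sub, map_neg, map_zero]
  rw [α.apply_symm_apply, hint (α.symm g), α.apply_symm_apply, ← H]
  abel
end

section
/- Let X be a nonsingular BV algebra and let ξ be an infinitesimal canonical map of X with logarithmic Jacobian e_ξ. Then Δ_X e_ξ = 0. -/
/-- the logarithmic Jacobian of an infinitesimal canonical map is
`Δ`-closed. -/
theorem stmt6 {X : Type*} [Ring X] [Algebra ℝ X]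
    (𝒜 : ℤ → Submodule ℝ X) [GradedAlgebra 𝒜] (B : BVAlgebraStr X 𝒜)
    (hX : IsNonsingularBracket B.bracket)
    (ξ : X →ₗ[ℝ] X) (e : X) (h : IsInfCanonicalWithJacobian B ξ e) :
    B.Δ e = 0 := by
  obtain ⟨hdeg, hder, he0, hrel⟩ := h
  obtain ⟨hΔdeg, hseven, hΔΔ, hΔ1⟩ := B.isBVLaplacian
  have hΔe1 : B.Δ e ∈ 𝒜 1 := by simpa using hΔdeg 0 e he0
  -- Step 1: Δ(Br e g) + Br e (Δg) = 0 for all g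
  have key0 : ∀ g : X, B.Δ (B.bracket e g) + B.bracket e (B.Δ g) = 0 := by
    intro g
    have h1 := congrArg B.Δ (hrel g)
    simp only [map_add, map_sub, map_zero] at h1
    have h2 := hrel (B.Δ g)
    rw [hΔΔ g, map_zero] at h2
    have h3 := hΔΔ (ξ g)
    linear_combination (norm := abel) h1 + h2 - h3
  -- Step 2: Δ(Δe · g) + Δe · Δg = 0 for homogeneous g
  have keyA : ∀ (j : ℤ) (g : X), g ∈ 𝒜 j →
      B.Δ (B.Δ e * g) + B.Δ e * B.Δ g = 0 := by
    intro j g hg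
    have br1 : B.bracket e g
        = B.Δ (e * g) - B.Δ e * g - e * B.Δ g := by
      have := B.isBracket 0 j e g he0 hg
      simpa using this
    have br2 : B.bracket e (B.Δ g)
        = B.Δ (e * B.Δ g) - B.Δ e * B.Δ g := by
      have := B.isBracket 0 (j+1) e (B.Δ g) he0 (hΔdeg j g hg)
      simpa [hΔΔ g] using this
    have h0 := key0 g
    rw [br1, br2] at h0
    simp only [map_sub] at h0
    have h4 := hΔΔ (e * g)
    linear_combination (norm := abel) - h0 + h4
  -- Step 3: Br f (Δe) = 0 for all f
  have keyB : ∀ f : X, B.bracket f (B.Δ e) = 0 := by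
    intro f
    induction f using DirectSum.Decomposition.inductionOn 𝒜 with
    | zero => simp
    | add x y hx hy => simp [hx, hy]
    | homogeneous m =>
      rename_i i
      obtain ⟨f, hf⟩ := m
      show B.bracket f (B.Δ e) = 0
      have hbr := B.isBracket i 1 f (B.Δ e) hf hΔe1
      have hc1 : f * B.Δ e = ((-1 : ℝ) ^ (i * 1)) • (B.Δ e * f) :=
        B.grcomm i 1 f (B.Δ e) hf hΔe1
      have hc2 : B.Δ f * B.Δ e = ((-1 : ℝ) ^ ((i+1) * 1)) • (B.Δ e * B.Δ f) :=
        B.grcomm (i+1) 1 (B.Δ f) (B.Δ e) (hΔdeg i f hf) hΔe1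
      have hA := keyA i f hf
      have hAeq : B.Δ (B.Δ e * f) = - (B.Δ e * B.Δ f) := by
        linear_combination (norm := abel) hA
      rw [hbr, hc1, hc2, map_smul, hAeq, hΔΔ e]
      simp only [mul_zero, smul_zero, sub_zero, mul_one]
      rw [zpow_add₀ (by norm_num : (-1:ℝ) ≠ 0) i 1]
      simp [smul_smul, ← zpow_add₀ (by norm_num : (-1:ℝ) ≠ 0)]
  -- Step 4: nonsingularity and grading
  obtain ⟨r, hr⟩ := (hX (B.Δ e)).mp keyB
  have hmem0 : B.Δ e ∈ 𝒜 0 := by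
    rw [hr, Algebra.algebraMap_eq_smul_one]
    exact Submodule.smul_mem _ _ (SetLike.one_mem_graded 𝒜)
  have hne := DirectSum.decompose_of_mem_ne 𝒜 hmem0 (by norm_num : (0:ℤ) ≠ 1)
  have hsame := DirectSum.decompose_of_mem_same 𝒜 hΔe1
  rw [hne] at hsame
  exact hsame.symm
end

section
/- Let X be a nonsingular BV algebra and let ξ, η be infinitesimal canonical maps of X with logarithmic Jacobians e_ξ, e_η. Then the commutator [ξ,η] = ξ∘η − η∘ξ is an infinitesimal canonical map of X, and ξ(e_η) − η(e_ξ) is a logarithmic Jacobian for [ξ,η]. -/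
/-- Auxiliary: Leibniz rule for the BV bracket with degree-0 entries. -/
lemma bv_leib0 {X : Type*} [Ring X] [Algebra ℝ X]
    {𝒜 : ℤ → Submodule ℝ X} [GradedAlgebra 𝒜] (B : BVAlgebraStr X 𝒜)
    {e f : X} {j : ℤ} {g : X} (he : e ∈ 𝒜 0) (hf : f ∈ 𝒜 0) (hg : g ∈ 𝒜 j) :
    B.bracket e (f * g) = B.bracket e f * g + f * B.bracket e g := by
  have hfg : f * g ∈ 𝒜 j := by simpa using SetLike.mul_mem_graded hf hg
  have h7 := B.isBVLaplacian.2.1 0 0 j e f g he hf hg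
  have hc1 : f * B.Δ e = B.Δ e * f := by
    have hΔe : B.Δ e ∈ 𝒜 1 := by simpa using B.isBVLaplacian.1 0 e he
    simpa using B.grcomm 0 1 f (B.Δ e) hf hΔe
  have hc2 : f * e = e * f := by simpa using B.grcomm 0 0 f e hf he
  rw [B.isBracket 0 j e (f * g) he hfg, B.isBracket 0 0 e f he hf,
    B.isBracket 0 j e g he hg]
  simp only [zpow_zero, pow_zero, one_smul, zero_add, add_zero, mul_zero, zero_mul] at h7 ⊢
  have h3 : f * (B.Δ e * g) = B.Δ e * (f * g) := by rw [← mul_assoc, hc1, mul_assoc]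
  have h4 : f * (e * B.Δ g) = e * (f * B.Δ g) := by rw [← mul_assoc, hc2, mul_assoc]
  have hassoc : e * (f * g) = e * f * g := (mul_assoc e f g).symm
  rw [hassoc, h7, sub_mul, sub_mul, mul_sub, mul_sub, h3, h4]
  noncomm_ring

/-- Auxiliary: an infinitesimal canonical map acts as a derivation on brackets
with degree-0 first entry. -/
lemma bv_comm_bracket {X : Type*} [Ring X] [Algebra ℝ X]
    {𝒜 : ℤ → Submodule ℝ X} [GradedAlgebra 𝒜] (B : BVAlgebraStr X 𝒜)
    {ξ : X →ₗ[ℝ] X} {e : X} (hξ : IsInfCanonicalWithJacobian B ξ e)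
    {e₁ : X} (he₁ : e₁ ∈ 𝒜 0) (g : X) :
    ξ (B.bracket e₁ g) = B.bracket (ξ e₁) g + B.bracket e₁ (ξ g) := by
  obtain ⟨hdeg, hder, he, hΔ⟩ := hξ
  have hΔ' : ∀ h : X, ξ (B.Δ h) = B.Δ (ξ h) + B.bracket e h := by
    intro h
    have t := hΔ h
    rw [sub_add_eq_add_sub, sub_eq_zero] at t
    exact t.symm
  have hhom : ∀ (j : ℤ) (g : X), g ∈ 𝒜 j →
      ξ (B.bracket e₁ g) = B.bracket (ξ e₁) g + B.bracket e₁ (ξ g) := by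
    intro j g hg
    have hξe₁ : ξ e₁ ∈ 𝒜 0 := hdeg 0 e₁ he₁
    have hξg : ξ g ∈ 𝒜 j := hdeg j g hg
    have he₁g : e₁ * g ∈ 𝒜 j := by simpa using SetLike.mul_mem_graded he₁ hg
    have hL := bv_leib0 B he he₁ hg
    rw [B.isBracket 0 j e₁ g he₁ hg, B.isBracket 0 j (ξ e₁) g hξe₁ hg,
      B.isBracket 0 j e₁ (ξ g) he₁ hξg]
    simp only [zpow_zero, one_smul]
    rw [map_sub, map_sub, hΔ' (e₁ * g), hder e₁ g, map_add,
      hder (B.Δ e₁) g, hder e₁ (B.Δ g), hΔ' e₁, hΔ' g, hL,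
      add_mul, mul_add]
    abel
  refine DirectSum.Decomposition.inductionOn 𝒜
    (motive := fun g => ξ (B.bracket e₁ g) = B.bracket (ξ e₁) g + B.bracket e₁ (ξ g)) ?_ ?_ ?_ g
  · simp
  · intro i m; exact hhom i m m.2
  · intro a b ha hb
    simp only [map_add, ha, hb]
    abel

/-- the commutator of two infinitesimal canonical maps is an
infinitesimal canonical map with logarithmic Jacobian `ξ(e_η) - η(e_ξ)`. -/
theorem stmt8 {X : Type*} [Ring X] [Algebra ℝ X]
    (𝒜 : ℤ → Submodule ℝ X) [GradedAlgebra 𝒜] (B : BVAlgebraStr X 𝒜)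
    (hX : IsNonsingularBracket B.bracket)
    (ξ η : X →ₗ[ℝ] X) (eXi eEta : X)
    (hξ : IsInfCanonicalWithJacobian B ξ eXi)
    (hη : IsInfCanonicalWithJacobian B η eEta) :
    IsInfCanonicalWithJacobian B (ξ.comp η - η.comp ξ) (ξ eEta - η eXi) := by
  have d1 : ∀ h : X, B.Δ (ξ h) = ξ (B.Δ h) - B.bracket eXi h := by
    intro h
    have t := hξ.2.2.2 h
    rw [sub_add_eq_add_sub, sub_eq_zero] at t
    rw [← t]; abel
  have d2 : ∀ h : X, B.Δ (η h) = η (B.Δ h) - B.bracket eEta h := by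
    intro h
    have t := hη.2.2.2 h
    rw [sub_add_eq_add_sub, sub_eq_zero] at t
    rw [← t]; abel
  refine ⟨?_, ?_, ?_, ?_⟩
  · intro i f hf
    simp only [LinearMap.sub_apply, LinearMap.comp_apply]
    exact Submodule.sub_mem _ (hξ.1 i _ (hη.1 i f hf)) (hη.1 i _ (hξ.1 i f hf))
  · intro f g
    simp only [LinearMap.sub_apply, LinearMap.comp_apply]
    rw [hη.2.1 f g, map_add, hξ.2.1, hξ.2.1, hξ.2.1 f g, map_add, hη.2.1, hη.2.1,
      sub_mul, mul_sub]
    abel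
  · exact Submodule.sub_mem _ (hξ.1 0 _ hη.2.2.1) (hη.1 0 _ hξ.2.2.1)
  · intro f
    have c1 := bv_comm_bracket B hξ hη.2.2.1 f
    have c2 := bv_comm_bracket B hη hξ.2.2.1 f
    simp only [LinearMap.sub_apply, LinearMap.comp_apply, map_sub]
    rw [d1 (η f), d2 (ξ f), d2 f, d1 f, map_sub, map_sub, c1, c2]
    abel
end

section
/- Let Δ₀ be a BV Laplacian on the graded commutative algebra X with associated BV bracket (−,−)₀, and let a ∈ X be a degree-0 element satisfying Δ₀a + (1/2)(a,a)₀ = 0. Then the operator Δ_a = Δ₀ + (a,−)₀ is again a BV Laplacian on X (i.e. Δ_a raises degree by 1, satisfies the second-order differential operator identity, squares to zero, and annihilates 1). -/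
section BVAux

variable {X : Type*} [Ring X] [Algebra ℝ X] {𝒜 : ℤ → Submodule ℝ X}

private lemma bv_sgn_add (m n : ℤ) : ((-1:ℝ))^(m+n) = (-1:ℝ)^m * (-1:ℝ)^n :=
  zpow_add₀ (by norm_num) m n

private lemma bv_sgn_sq (n : ℤ) : ((-1:ℝ))^n * (-1:ℝ)^n = 1 := by
  rw [← bv_sgn_add]; exact Even.neg_one_zpow ⟨n, rfl⟩

/-- degree-0 elements are central -/
private lemma bv_comm0 [GradedAlgebra 𝒜] (hgc : GradedComm 𝒜) {a : X} (ha : a ∈ 𝒜 0)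
    (f : X) : a * f = f * a := by
  induction f using DirectSum.Decomposition.inductionOn 𝒜 with
  | zero => simp
  | @homogeneous j m =>
      have h := hgc 0 j a m ha m.2
      simpa using h
  | add x y hx hy => simp [mul_add, add_mul, hx, hy]

/-- bracket with the degree-0 element a, in closed form -/
private lemma bv_braF [GradedAlgebra 𝒜] (B : BVAlgebraStr X 𝒜) {a : X} (ha : a ∈ 𝒜 0)
    (f : X) : B.bracket a f = B.Δ (a * f) - B.Δ a * f - a * B.Δ f := by
  induction f using DirectSum.Decomposition.inductionOn 𝒜 with
  | zero => simp
  | @homogeneous j m =>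
      have h := B.isBracket 0 j a m ha m.2
      simpa using h
  | add x y hx hy =>
      simp only [map_add, mul_add, add_mul, hx, hy]
      abel

end BVAux

section BVAux2

variable {X : Type*} [Ring X] [Algebra ℝ X] {𝒜 : ℤ → Submodule ℝ X}

/-- the twist raises degree by one -/
private lemma bv_braMem [GradedAlgebra 𝒜] (B : BVAlgebraStr X 𝒜) {a : X} (ha : a ∈ 𝒜 0)
    (i : ℤ) (f : X) (hf : f ∈ 𝒜 i) : B.bracket a f ∈ 𝒜 (i + 1) := by
  rw [bv_braF B ha]
  have h1 : a * f ∈ 𝒜 i := by simpa using SetLike.mul_mem_graded ha hf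
  have h2 : B.Δ (a * f) ∈ 𝒜 (i + 1) := B.isBVLaplacian.1 i _ h1
  have hDa : B.Δ a ∈ 𝒜 1 := by simpa using B.isBVLaplacian.1 0 a ha
  have h3 : B.Δ a * f ∈ 𝒜 (i + 1) := by
    simpa [add_comm] using SetLike.mul_mem_graded hDa hf
  have h4 : a * B.Δ f ∈ 𝒜 (i + 1) := by
    simpa using SetLike.mul_mem_graded ha (B.isBVLaplacian.1 i f hf)
  exact sub_mem (sub_mem h2 h3) h4

/-- the twist is an odd derivation -/
private lemma bv_der [GradedAlgebra 𝒜] (B : BVAlgebraStr X 𝒜) {a : X} (ha : a ∈ 𝒜 0)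
    (i : ℤ) (f : X) (hf : f ∈ 𝒜 i) (g : X) :
    B.bracket a (f * g) = B.bracket a f * g + ((-1:ℝ)^i) • (f * B.bracket a g) := by
  induction g using DirectSum.Decomposition.inductionOn 𝒜 with
  | zero => simp
  | @homogeneous j m =>
      obtain ⟨g, hg⟩ := m
      show B.bracket a (f * g) = _
      have hDa : B.Δ a ∈ 𝒜 1 := by simpa using B.isBVLaplacian.1 0 a ha
      have hsq : ((-1:ℝ))^i * (-1:ℝ)^i = 1 := bv_sgn_sq i
      -- comm facts
      have hc1 : f * B.Δ a = ((-1:ℝ)^i) • (B.Δ a * f) := by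
        simpa using B.grcomm i 1 f (B.Δ a) hf hDa
      have hc1' : ((-1:ℝ)^i) • (f * (B.Δ a * g)) = B.Δ a * (f * g) := by
        have := congrArg (· * g) hc1
        simp only [smul_mul_assoc, mul_assoc] at this
        rw [this, smul_smul, hsq, one_smul]
      have hc2' : f * (a * B.Δ g) = a * (f * B.Δ g) := by
        have := congrArg (· * B.Δ g) (bv_comm0 B.grcomm ha f).symm
        simpa only [mul_assoc] using this
      have h7 := B.isBVLaplacian.2.1 0 i j a f g ha hf hg
      simp only [zero_add, one_mul, zpow_zero, one_smul, mul_assoc] at h7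
      simp only [bv_braF B ha, sub_mul, mul_sub, smul_mul_assoc, mul_assoc]
      linear_combination (norm := module) h7 + hc1' + ((-1:ℝ)^i) • hc2'
  | add x y hx hy =>
      simp only [mul_add, map_add, hx, hy, smul_add]
      abel

end BVAux2

section BVAux3

variable {X : Type*} [Ring X] [Algebra ℝ X] {𝒜 : ℤ → Submodule ℝ X}

/-- seven-term identity for the twist operator -/
private lemma bv_L7 [GradedAlgebra 𝒜] (B : BVAlgebraStr X 𝒜) {a : X} (ha : a ∈ 𝒜 0)
    (i j : ℤ) (f g h : X) (hf : f ∈ 𝒜 i) (hg : g ∈ 𝒜 j) :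
    B.bracket a (f * g * h) =
      -(B.bracket a f * g * h) - ((-1 : ℝ) ^ i) • (f * B.bracket a g * h)
        - ((-1 : ℝ) ^ (i + j)) • (f * g * B.bracket a h)
        + B.bracket a (f * g) * h
        + ((-1 : ℝ) ^ ((i + 1) * j)) • (g * B.bracket a (f * h))
        + ((-1 : ℝ) ^ i) • (f * B.bracket a (g * h)) := by
  have hfg : f * g ∈ 𝒜 (i + j) := SetLike.mul_mem_graded hf hg
  have hLf : B.bracket a f ∈ 𝒜 (i + 1) := bv_braMem B ha i f hf
  have hx1 : ((-1:ℝ))^(i+j) = (-1:ℝ)^i * (-1:ℝ)^j := bv_sgn_add i j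
  have hx2 : ((-1:ℝ))^(i*j+j) = (-1:ℝ)^(i*j) * (-1:ℝ)^j := bv_sgn_add _ _
  have hx2' : ((-1:ℝ))^((i+1)*j) = (-1:ℝ)^(i*j) * (-1:ℝ)^j := by
    rw [show (i+1)*j = i*j + j by ring, bv_sgn_add]
  -- comm facts
  have hA : B.bracket a f * (g * h) =
      ((-1:ℝ)^(i*j) * (-1:ℝ)^j) • (g * (B.bracket a f * h)) := by
    have h0 := B.grcomm (i+1) j (B.bracket a f) g hLf hg
    rw [hx2'] at h0
    have := congrArg (· * h) h0
    simpa only [smul_mul_assoc, mul_assoc] using this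
  have hB : ((-1:ℝ)^(i*j)) • (g * (f * B.bracket a h)) = f * (g * B.bracket a h) := by
    have h0 := B.grcomm j i g f hg hf
    have h1 := congrArg (· * B.bracket a h) h0
    simp only [smul_mul_assoc, mul_assoc] at h1
    rw [h1, smul_smul, mul_comm j i, bv_sgn_sq, one_smul]
  have e1 := bv_der B ha (i+j) (f*g) hfg h
  have e2 := bv_der B ha i f hf g
  have e3 := bv_der B ha i f hf h
  have e4 := bv_der B ha j g hg h
  rw [e1, e2, e3, e4]
  simp only [hx1, hx2, hx2', one_mul, mul_add, add_mul, smul_add, mul_smul_comm,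
    smul_mul_assoc, smul_smul, mul_assoc]
  linear_combination (norm := module) hA - ((-1:ℝ)^i * (-1:ℝ)^j) • hB

end BVAux3

section BVAux4

variable {X : Type*} [Ring X] [Algebra ℝ X] {𝒜 : ℤ → Submodule ℝ X}

private lemma bv_stepA [GradedAlgebra 𝒜] (B : BVAlgebraStr X 𝒜) {a : X} (ha : a ∈ 𝒜 0)
    (f : X) :
    B.Δ (B.bracket a f) + B.bracket a (B.Δ f)
      = -(B.Δ (B.Δ a * f)) - B.Δ a * B.Δ f := by
  simp only [bv_braF B ha, map_sub, B.isBVLaplacian.2.2.1, mul_zero, zero_sub, sub_zero]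
  abel

private lemma bv_hM [GradedAlgebra 𝒜] (B : BVAlgebraStr X 𝒜) {a : X} (ha : a ∈ 𝒜 0)
    (hma : B.Δ a + (1 / 2 : ℝ) • B.bracket a a = 0) :
    B.Δ (a * a) = (2:ℝ) • (a * B.Δ a) - (2:ℝ) • (B.Δ a) := by
  have h0 := hma
  rw [bv_braF B ha a, ← bv_comm0 B.grcomm ha (B.Δ a)] at h0
  linear_combination (norm := module) (2:ℝ) • h0

private lemma bv_hM2 [GradedAlgebra 𝒜] (B : BVAlgebraStr X 𝒜) {a : X} (ha : a ∈ 𝒜 0)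
    (hma : B.Δ a + (1 / 2 : ℝ) • B.bracket a a = 0) :
    B.Δ (a * B.Δ a) = 0 := by
  have h := congrArg B.Δ (bv_hM B ha hma)
  simp only [map_sub, map_smul, B.isBVLaplacian.2.2.1, smul_zero, sub_zero] at h
  have h2 : (2:ℝ) • B.Δ (a * B.Δ a) = 0 := h.symm
  exact (smul_eq_zero.mp h2).resolve_left (by norm_num)

private lemma bv_DaDa [GradedAlgebra 𝒜] (B : BVAlgebraStr X 𝒜) {a : X} (ha : a ∈ 𝒜 0) :
    B.Δ a * B.Δ a = 0 := by
  have hDa : B.Δ a ∈ 𝒜 1 := by simpa using B.isBVLaplacian.1 0 a ha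
  have h := B.grcomm 1 1 (B.Δ a) (B.Δ a) hDa hDa
  have h1 : ((-1:ℝ))^((1:ℤ)*1) = -1 := by norm_num
  rw [h1] at h
  have h2 : (2:ℝ) • (B.Δ a * B.Δ a) = 0 := by
    linear_combination (norm := module) h
  exact (smul_eq_zero.mp h2).resolve_left (by norm_num)

private lemma bv_stepB' [GradedAlgebra 𝒜] (B : BVAlgebraStr X 𝒜) {a : X} (ha : a ∈ 𝒜 0)
    (hma : B.Δ a + (1 / 2 : ℝ) • B.bracket a a = 0) (j : ℤ) (g : X) (hg : g ∈ 𝒜 j) :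
    B.bracket a (B.bracket a g) = B.Δ (B.Δ a * g) + B.Δ a * B.Δ g := by
  have hDa1 : B.Δ a ∈ 𝒜 1 := by simpa using B.isBVLaplacian.1 0 a ha
  have hDg : B.Δ g ∈ 𝒜 (j+1) := B.isBVLaplacian.1 j g hg
  have hsq := B.isBVLaplacian.2.2.1
  have hca : ∀ x : X, B.Δ a * (a * x) = a * (B.Δ a * x) := by
    intro x; rw [← mul_assoc, ← bv_comm0 B.grcomm ha (B.Δ a), mul_assoc]
  have hDDag : B.Δ a * (B.Δ a * g) = 0 := by
    rw [← mul_assoc, bv_DaDa B ha, zero_mul]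
  have hM2g : B.Δ (a * B.Δ a) * g = 0 := by rw [bv_hM2 B ha hma, zero_mul]
  have hT1 := B.isBVLaplacian.2.1 0 0 j a a g ha ha hg
  simp only [zero_add, mul_zero, zpow_zero, one_smul, mul_assoc, hca] at hT1
  have hT3 := congrArg B.Δ hT1
  simp only [map_add, map_sub, map_neg, hsq] at hT3
  have hT2 := B.isBVLaplacian.2.1 0 0 (j+1) a a (B.Δ g) ha ha hDg
  simp only [zero_add, mul_zero, zpow_zero, one_smul, mul_assoc, hca, hsq] at hT2
  have hT4 := B.isBVLaplacian.2.1 0 1 j a (B.Δ a) g ha hDa1 hg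
  simp only [zero_add, one_mul, mul_zero, zpow_zero, zpow_one, one_smul, neg_smul,
    mul_assoc, hca, hsq, hDDag, hM2g, zero_mul, neg_zero, sub_zero, add_zero,
    zero_sub, sub_neg_eq_add] at hT4
  have hM := bv_hM B ha hma
  have hM1 : B.Δ (B.Δ (a*a) * g)
      = (2:ℝ) • B.Δ (a * (B.Δ a * g)) - (2:ℝ) • B.Δ (B.Δ a * g) := by
    have h := congrArg (fun x => B.Δ (x * g)) hM
    simpa only [sub_mul, smul_mul_assoc, map_sub, map_smul, mul_assoc] using h
  have hM2' : B.Δ (a*a) * B.Δ g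
      = (2:ℝ) • (a * (B.Δ a * B.Δ g)) - (2:ℝ) • (B.Δ a * B.Δ g) := by
    have h := congrArg (· * B.Δ g) hM
    simpa only [sub_mul, smul_mul_assoc, mul_assoc] using h
  simp only [bv_braF B ha, map_sub, mul_sub, sub_mul, hsq, mul_zero, zero_mul,
    sub_zero, mul_assoc, hca, hDDag]
  linear_combination (norm := module) (-1/2 : ℝ) • hT3 + (-1/2 : ℝ) • hT2
    + (-1 : ℝ) • hT4 + (-1/2 : ℝ) • hM1 + (-1/2 : ℝ) • hM2'

private lemma bv_stepB [GradedAlgebra 𝒜] (B : BVAlgebraStr X 𝒜) {a : X} (ha : a ∈ 𝒜 0)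
    (hma : B.Δ a + (1 / 2 : ℝ) • B.bracket a a = 0) (g : X) :
    B.bracket a (B.bracket a g) = B.Δ (B.Δ a * g) + B.Δ a * B.Δ g := by
  induction g using DirectSum.Decomposition.inductionOn 𝒜 with
  | zero => simp
  | @homogeneous j m => exact bv_stepB' B ha hma j m m.2
  | add x y hx hy =>
      simp only [map_add, mul_add, hx, hy]
      abel

end BVAux4

/-- twisting a BV Laplacian by `(a,-)₀` with `a` a degree-0
solution of the master equation yields again a BV Laplacian. -/
theorem stmt10 {X : Type*} [Ring X] [Algebra ℝ X]
    (𝒜 : ℤ → Submodule ℝ X) [GradedAlgebra 𝒜] (B : BVAlgebraStr X 𝒜)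
    (a : X) (ha : a ∈ 𝒜 0)
    (hma : B.Δ a + (1 / 2 : ℝ) • B.bracket a a = 0) :
    IsBVLaplacian 𝒜 (B.Δ + B.bracket a) := by
  refine ⟨?_, ?_, ?_, ?_⟩
  · intro i f hf
    rw [LinearMap.add_apply]
    exact add_mem (B.isBVLaplacian.1 i f hf) (bv_braMem B ha i f hf)
  · intro i j k f g h hf hg hh
    have h7 := B.isBVLaplacian.2.1 i j k f g h hf hg hh
    have l7 := bv_L7 B ha i j f g h hf hg
    simp only [LinearMap.add_apply, mul_add, add_mul, smul_add] at h7 l7 ⊢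
    linear_combination (norm := module) h7 + l7
  · intro f
    simp only [LinearMap.add_apply, map_add, B.isBVLaplacian.2.2.1, zero_add]
    linear_combination (norm := module) bv_stepA B ha f + bv_stepB B ha hma f
  · simp only [LinearMap.add_apply, B.isBVLaplacian.2.2.2, bv_braF B ha, mul_one,
      mul_zero, zero_add]
    abel
end

section
/- Let Δ₀ be a nonsingular BV Laplacian on the graded commutative algebra X with BV bracket (−,−)₀, let a ∈ X be a degree-0 element with Δ₀a + (1/2)(a,a)₀ = 0, let α : X → X be an invertible degree-preserving morphism of unital graded algebras, and set Δ_{αa} = α∘(Δ₀ + (a,−)₀)∘α⁻¹. Then Δ_{αa} is nonsingular: the center of its associated BV bracket equals ℝ·1. -/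
private lemma bv_symm_deg {X : Type*} [Ring X] [Algebra ℝ X]
    (𝒜 : ℤ → Submodule ℝ X) [GradedAlgebra 𝒜]
    (α : X ≃ₐ[ℝ] X) (hdeg : ∀ (i : ℤ) (f : X), f ∈ 𝒜 i → α f ∈ 𝒜 i)
    (i : ℤ) (y : X) (hy : y ∈ 𝒜 i) : α.symm y ∈ 𝒜 i := by
  classical
  set x := α.symm y with hx
  have hxy : α x = y := α.apply_symm_apply y
  have hsum := DirectSum.sum_support_decompose 𝒜 x
  have hy' : y = ∑ k ∈ (DirectSum.decompose 𝒜 x).support,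
      α (DirectSum.decompose 𝒜 x k : X) := by
    rw [← map_sum, hsum, hxy]
  have hcomp : ∀ j : ℤ, (DirectSum.decompose 𝒜 y j : X)
      = ∑ k ∈ (DirectSum.decompose 𝒜 x).support,
        (DirectSum.decompose 𝒜 (α (DirectSum.decompose 𝒜 x k : X)) j : X) := by
    intro j
    rw [hy', DirectSum.decompose_sum, DFinsupp.finset_sum_apply]
    exact AddSubmonoidClass.coe_finset_sum _ _
  have hzero : ∀ j, j ≠ i → (DirectSum.decompose 𝒜 x j : X) = 0 := by
    intro j hj
    by_cases hjs : j ∈ (DirectSum.decompose 𝒜 x).support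
    · have h0 : (DirectSum.decompose 𝒜 y j : X) = 0 :=
        DirectSum.decompose_of_mem_ne 𝒜 hy (Ne.symm hj)
      have h1 : (DirectSum.decompose 𝒜 y j : X)
          = α (DirectSum.decompose 𝒜 x j : X) := by
        rw [hcomp j, Finset.sum_eq_single_of_mem j hjs]
        · exact DirectSum.decompose_of_mem_same 𝒜 (hdeg j _ (SetLike.coe_mem _))
        · intro k _ hk
          exact DirectSum.decompose_of_mem_ne 𝒜 (hdeg k _ (SetLike.coe_mem _)) hk
      have : α (DirectSum.decompose 𝒜 x j : X) = 0 := by rw [← h1, h0]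
      exact α.injective (by simpa using this)
    · simpa using DFinsupp.notMem_support_iff.mp hjs ▸ rfl
  have hxi : x = (DirectSum.decompose 𝒜 x i : X) := by
    by_cases his : i ∈ (DirectSum.decompose 𝒜 x).support
    · have h2 := Finset.sum_eq_single_of_mem (f := fun k => (DirectSum.decompose 𝒜 x k : X))
        i his (fun k _ hk => hzero k hk)
      conv_lhs => rw [← hsum]
      simpa using h2
    · have h3 : (DirectSum.decompose 𝒜 x i : X) = 0 := by
        simpa using DFinsupp.notMem_support_iff.mp his ▸ rfl
      have h2 : x = 0 := by
        conv_lhs => rw [← hsum]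
        exact Finset.sum_eq_zero fun k hk => hzero k (fun h => his (h ▸ hk))
      rw [h3, h2]
  rw [hxi]
  exact SetLike.coe_mem _

private lemma bv_bracket_leibniz {X : Type*} [Ring X] [Algebra ℝ X]
    {𝒜 : ℤ → Submodule ℝ X} [GradedAlgebra 𝒜] (B : BVAlgebraStr X 𝒜)
    (a : X) (ha : a ∈ 𝒜 0) (m n : ℤ) (F G : X) (hF : F ∈ 𝒜 m) (hG : G ∈ 𝒜 n) :
    B.bracket a (F * G) = B.bracket a F * G + ((-1:ℝ)^m) • (F * B.bracket a G) := by
  have hFG : F * G ∈ 𝒜 (m + n) := SetLike.mul_mem_graded hF hG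
  have hΔa : B.Δ a ∈ 𝒜 1 := by simpa using B.isBVLaplacian.1 0 a ha
  have hs : ((-1:ℝ)^m) * ((-1:ℝ)^m) = 1 := by
    rw [← zpow_add₀ (by norm_num : (-1:ℝ) ≠ 0), ← two_mul, zpow_mul]; norm_num
  have h7 := B.isBVLaplacian.2.1 0 m n a F G ha hF hG
  have hbaF := B.isBracket 0 m a F ha hF
  have hbaG := B.isBracket 0 n a G ha hG
  have hbaFG := B.isBracket 0 (m+n) a (F*G) ha hFG
  simp only [zpow_zero, one_smul, zero_add, one_mul] at h7 hbaF hbaG hbaFG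
  have hc2' : ∀ z : X, F * (a * z) = a * (F * z) := fun z => by
    rw [← mul_assoc, show F * a = a * F by simpa using B.grcomm m 0 F a hF ha, mul_assoc]
  have hc1 : F * B.Δ a = ((-1:ℝ)^m) • (B.Δ a * F) := by
    simpa using B.grcomm m 1 F (B.Δ a) hF hΔa
  rw [hbaFG, hbaF, hbaG, ← mul_assoc a F G, h7]
  simp only [sub_mul, mul_sub, smul_sub, smul_add, smul_smul, hs, one_smul,
    mul_assoc]
  rw [show F * (B.Δ a * G) = ((-1:ℝ)^m) • (B.Δ a * (F * G)) by
      rw [← mul_assoc, hc1, smul_mul_assoc, mul_assoc],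
    hc2']
  simp only [smul_sub, smul_smul, hs, one_smul, one_mul]
  abel

/-- the conjugated twisted Laplacian `Δ_{αa}` is nonsingular. -/
theorem stmt13 {X : Type*} [Ring X] [Algebra ℝ X]
    (𝒜 : ℤ → Submodule ℝ X) [GradedAlgebra 𝒜] (B : BVAlgebraStr X 𝒜)
    (hX : IsNonsingularBracket B.bracket)
    (a : X) (ha : a ∈ 𝒜 0)
    (hma : B.Δ a + (1 / 2 : ℝ) • B.bracket a a = 0)
    (α : X ≃ₐ[ℝ] X) (hdeg : ∀ (i : ℤ) (f : X), f ∈ 𝒜 i → α f ∈ 𝒜 i) :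
    ∀ Br : X →ₗ[ℝ] X →ₗ[ℝ] X,
      IsBVBracketOf 𝒜
        (α.toLinearMap.comp ((B.Δ + B.bracket a).comp α.symm.toLinearMap)) Br →
      IsNonsingularBracket Br := by
  
  intro Br hBr
  classical
  have hsymm := bv_symm_deg 𝒜 α hdeg
  have hom : ∀ (m n : ℤ) (f g : X), f ∈ 𝒜 m → g ∈ 𝒜 n →
      Br f g = α (B.bracket (α.symm f) (α.symm g)) := by
    intro m n f g hf hg
    obtain ⟨F, rfl⟩ : ∃ F, f = α F := ⟨α.symm f, (α.apply_symm_apply f).symm⟩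
    obtain ⟨G, rfl⟩ : ∃ G, g = α G := ⟨α.symm g, (α.apply_symm_apply g).symm⟩
    have hF : F ∈ 𝒜 m := by simpa using hsymm m _ hf
    have hG : G ∈ 𝒜 n := by simpa using hsymm n _ hg
    have hs : ((-1:ℝ)^m) * ((-1:ℝ)^m) = 1 := by
      rw [← zpow_add₀ (by norm_num : (-1:ℝ) ≠ 0), ← two_mul, zpow_mul]; norm_num
    rw [hBr m n _ _ hf hg]
    simp only [LinearMap.comp_apply, LinearMap.add_apply, AlgEquiv.toLinearMap_apply,
      ← map_mul, AlgEquiv.symm_apply_apply]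
    rw [← map_smul, ← map_sub, ← map_sub, ← map_smul]
    rw [B.isBracket m n F G hF hG]
    refine congrArg α ?_
    rw [bv_bracket_leibniz B a ha m n F G hF hG]
    simp only [add_mul, mul_add, smul_add, smul_sub, smul_smul, hs, one_smul]
    abel
  have key : ∀ f g : X, Br f g = α (B.bracket (α.symm f) (α.symm g)) := by
    intro f g
    conv_lhs => rw [← DirectSum.sum_support_decompose 𝒜 f,
      ← DirectSum.sum_support_decompose 𝒜 g]
    conv_rhs => rw [← DirectSum.sum_support_decompose 𝒜 f,
      ← DirectSum.sum_support_decompose 𝒜 g]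
    simp only [map_sum, LinearMap.sum_apply, LinearMap.coe_sum, Finset.sum_apply]
    refine Finset.sum_congr rfl fun j _ => Finset.sum_congr rfl fun i _ =>
      hom i j _ _ (SetLike.coe_mem _) (SetLike.coe_mem _)
  intro c
  constructor
  · intro h
    have h2 : ∀ F : X, B.bracket F (α.symm c) = 0 := by
      intro F
      have h3 := h (α F)
      rw [key, α.symm_apply_apply] at h3
      exact α.injective (by simpa using h3)
    obtain ⟨r, hr⟩ := (hX (α.symm c)).mp h2
    exact ⟨r, by rw [← α.apply_symm_apply c, hr, AlgEquiv.commutes]⟩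
  · rintro ⟨r, rfl⟩ f
    rw [key, show α.symm (algebraMap ℝ X r) = algebraMap ℝ X r from α.symm.commutes r,
      (hX (algebraMap ℝ X r)).mpr ⟨r, rfl⟩ (α.symm f), map_zero]
end

section
/- Let Δ₀ be a nonsingular BV Laplacian on the graded commutative algebra X with BV bracket (−,−)₀, let a₁, a₂ ∈ X be degree-0 elements each satisfying Δ₀aᵢ + (1/2)(aᵢ,aᵢ)₀ = 0, let α₁, α₂ : X → X be invertible degree-preserving morphisms of unital graded algebras, and let X_{αᵢaᵢ} denote X equipped with the BV Laplacian Δ_{αᵢaᵢ} = αᵢ∘(Δ₀ + (aᵢ,−)₀)∘αᵢ⁻¹. Then β = α₂∘α₁⁻¹ is a canonical map from X_{α₁a₁} to X_{α₂a₂}, and −α₂(a₂ − a₁) is a logarithmic Jacobian for β. -/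
/-- Components of the decomposition commute with a degree-preserving algebra
automorphism. -/
lemma decompose_comm_aux {X : Type*} [Ring X] [Algebra ℝ X]
    (𝒜 : ℤ → Submodule ℝ X) [GradedAlgebra 𝒜] (α : X ≃ₐ[ℝ] X)
    (hdeg : ∀ (i : ℤ) (f : X), f ∈ 𝒜 i → α f ∈ 𝒜 i) (j : ℤ) (y : X) :
    ((DirectSum.decompose 𝒜 (α y) j : 𝒜 j) : X)
      = α ((DirectSum.decompose 𝒜 y j : 𝒜 j) : X) := by
  induction y using DirectSum.Decomposition.inductionOn 𝒜 with
  | zero => simp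
  | @homogeneous i m =>
    rcases eq_or_ne i j with rfl | hij
    · rw [DirectSum.decompose_of_mem_same 𝒜 (hdeg i m m.2),
        DirectSum.decompose_of_mem_same 𝒜 m.2]
    · rw [DirectSum.decompose_of_mem_ne 𝒜 (hdeg i m m.2) hij,
        DirectSum.decompose_of_mem_ne 𝒜 m.2 hij, map_zero]
  | add m m' hm hm' =>
    rw [map_add, DirectSum.decompose_add, DirectSum.add_apply, Submodule.coe_add,
      hm, hm', DirectSum.decompose_add, DirectSum.add_apply, Submodule.coe_add,
      map_add]

/-- The inverse of a degree-preserving algebra automorphism is degree-preserving. -/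
lemma symm_degree_preserving {X : Type*} [Ring X] [Algebra ℝ X]
    (𝒜 : ℤ → Submodule ℝ X) [GradedAlgebra 𝒜] (α : X ≃ₐ[ℝ] X)
    (hdeg : ∀ (i : ℤ) (f : X), f ∈ 𝒜 i → α f ∈ 𝒜 i) :
    ∀ (i : ℤ) (f : X), f ∈ 𝒜 i → α.symm f ∈ 𝒜 i := by
  intro i f hf
  have h := decompose_comm_aux 𝒜 α hdeg i (α.symm f)
  rw [α.apply_symm_apply, DirectSum.decompose_of_mem_same 𝒜 hf] at h
  have h2 : α.symm f = ((DirectSum.decompose 𝒜 (α.symm f) i : 𝒜 i) : X) :=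
    α.injective ((α.apply_symm_apply f).trans h)
  rw [h2]; exact SetLike.coe_mem _

/-- Leibniz rule: the bracket with a degree-0 element is a derivation. -/
lemma bv_leibniz {X : Type*} [Ring X] [Algebra ℝ X]
    {𝒜 : ℤ → Submodule ℝ X} [GradedAlgebra 𝒜] (B : BVAlgebraStr X 𝒜)
    {a g h : X} {j k : ℤ} (ha : a ∈ 𝒜 0) (hg : g ∈ 𝒜 j) (hh : h ∈ 𝒜 k) :
    B.bracket a (g * h)
      = B.bracket a g * h + ((-1 : ℝ) ^ j) • (g * B.bracket a h) := by
  have hD := B.isBVLaplacian.1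
  have hDa : B.Δ a ∈ 𝒜 1 := by simpa using hD 0 a ha
  have hgh : g * h ∈ 𝒜 (j + k) := SetLike.mul_mem_graded hg hh
  have hs : ((-1 : ℝ) ^ j) * ((-1 : ℝ) ^ j) = 1 := by
    rw [← zpow_add₀ (by norm_num : (-1 : ℝ) ≠ 0)]
    exact Even.neg_one_zpow ⟨j, rfl⟩
  have h1 : g * B.Δ a = ((-1 : ℝ) ^ j) • (B.Δ a * g) := by
    simpa using B.grcomm j 1 g (B.Δ a) hg hDa
  have h2 : g * a = a * g := by simpa using B.grcomm j 0 g a hg ha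
  have h1' : g * (B.Δ a * h) = ((-1 : ℝ) ^ j) • (B.Δ a * (g * h)) := by
    rw [← mul_assoc, h1, smul_mul_assoc, mul_assoc]
  have h2' : g * (a * B.Δ h) = a * (g * B.Δ h) := by
    rw [← mul_assoc, h2, mul_assoc]
  have seven := B.isBVLaplacian.2.1 0 j k a g h ha hg hh
  simp only [zero_add, zpow_zero, one_smul, one_mul] at seven
  have e1 := B.isBracket 0 (j + k) a (g * h) ha hgh
  have e2 := B.isBracket 0 j a g ha hg
  have e3 := B.isBracket 0 k a h ha hh
  simp only [zpow_zero, one_smul] at e1 e2 e3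
  rw [e1, e2, e3, ← mul_assoc, seven]
  simp only [smul_sub, smul_add, sub_mul, smul_mul_assoc, mul_sub, mul_smul_comm,
    smul_smul, hs, one_smul, mul_assoc, h1', h2']
  abel

/-- `β = α₂ ∘ α₁⁻¹` is a canonical map from `X_{α₁a₁}` to
`X_{α₂a₂}` with logarithmic Jacobian `-α₂(a₂ - a₁)`. -/
theorem stmt14 {X : Type*} [Ring X] [Algebra ℝ X]
    (𝒜 : ℤ → Submodule ℝ X) [GradedAlgebra 𝒜] (B : BVAlgebraStr X 𝒜)
    (hX : IsNonsingularBracket B.bracket)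
    (a1 a2 : X) (ha1 : a1 ∈ 𝒜 0) (ha2 : a2 ∈ 𝒜 0)
    (hma1 : B.Δ a1 + (1 / 2 : ℝ) • B.bracket a1 a1 = 0)
    (hma2 : B.Δ a2 + (1 / 2 : ℝ) • B.bracket a2 a2 = 0)
    (α1 α2 : X ≃ₐ[ℝ] X)
    (hdeg1 : ∀ (i : ℤ) (f : X), f ∈ 𝒜 i → α1 f ∈ 𝒜 i)
    (hdeg2 : ∀ (i : ℤ) (f : X), f ∈ 𝒜 i → α2 f ∈ 𝒜 i) :
    ∀ Br2 : X →ₗ[ℝ] X →ₗ[ℝ] X,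
      IsBVBracketOf 𝒜
        (α2.toLinearMap.comp ((B.Δ + B.bracket a2).comp α2.symm.toLinearMap)) Br2 →
      IsCanonicalWithJacobian 𝒜 𝒜
        (α1.toLinearMap.comp ((B.Δ + B.bracket a1).comp α1.symm.toLinearMap))
        (α2.toLinearMap.comp ((B.Δ + B.bracket a2).comp α2.symm.toLinearMap))
        Br2 (α1.symm.trans α2) (-(α2 (a2 - a1))) := by
  intro Br2 hBr2
  have hsymm1 := symm_degree_preserving 𝒜 α1 hdeg1
  have hc : a2 - a1 ∈ 𝒜 0 := sub_mem ha2 ha1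
  have hαc : α2 (a2 - a1) ∈ 𝒜 0 := hdeg2 0 _ hc
  refine ⟨fun i f hf => hdeg2 i _ (hsymm1 i f hf), neg_mem hαc, ?_⟩
  have key : ∀ g : X, Br2 (α2 (a2 - a1)) (α2 g) = α2 (B.bracket (a2 - a1) g) := by
    intro g
    induction g using DirectSum.Decomposition.inductionOn 𝒜 with
    | zero => simp
    | @homogeneous j m =>
      have hbr := hBr2 0 j (α2 (a2 - a1)) (α2 m) hαc (hdeg2 j _ m.2)
      rw [hbr]
      simp only [zpow_zero, one_smul, LinearMap.comp_apply, AlgEquiv.toLinearMap_apply,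
        AlgEquiv.symm_apply_apply, ← map_mul, LinearMap.add_apply]
      rw [← map_sub, ← map_sub]
      refine congrArg α2 ?_
      have hlz := bv_leibniz B ha2 hc m.2
      simp only [zpow_zero, one_smul] at hlz
      have hbrk := B.isBracket 0 j (a2 - a1) (m : X) hc m.2
      simp only [zpow_zero, one_smul] at hbrk
      rw [hbrk, hlz]
      simp only [add_mul, mul_add]
      abel
    | add m m' hm hm' =>
      rw [map_add, map_add, map_add, map_add, hm, hm']
  intro f
  simp only [AlgEquiv.trans_apply, LinearMap.comp_apply, AlgEquiv.toLinearMap_apply,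
    AlgEquiv.symm_apply_apply, map_neg, LinearMap.neg_apply]
  rw [key (α1.symm f), ← map_sub, ← map_neg, ← map_add]
  rw [EmbeddingLike.map_eq_zero_iff]
  simp only [LinearMap.add_apply, map_sub, LinearMap.sub_apply]
  abel
end

section
/- Let X and Y be nonsingular BV algebras, let α : X → Y be a canonical map with logarithmic Jacobian r_α, and let S ∈ X be a BV quantum master action of X, i.e. a degree-0 element with Δ_X S + (1/2)(S,S)_X = 0. Then the α-transform α̂S = α(S) + r_α is a degree-0 element of Y satisfying the quantum master equation Δ_Y(α̂S) + (1/2)(α̂S, α̂S)_Y = 0. -/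
/-! ### Auxiliary lemmas -/

section Helpers

variable {Y : Type*} [Ring Y] [Algebra ℝ Y] {ℬ : ℤ → Submodule ℝ Y}

lemma comm0' (hgc : GradedComm ℬ) {i : ℤ} {a b : Y} (ha : a ∈ ℬ 0) (hb : b ∈ ℬ i) :
    a * b = b * a := by
  have h := hgc 0 i a b ha hb
  rwa [zero_mul, zpow_zero, one_smul] at h

lemma br00' {d : Y →ₗ[ℝ] Y} {Br : Y →ₗ[ℝ] Y →ₗ[ℝ] Y} (hB : IsBVBracketOf ℬ d Br)
    {j : ℤ} {a b : Y} (ha : a ∈ ℬ 0) (hb : b ∈ ℬ j) :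
    Br a b = d (a * b) - d a * b - a * d b := by
  rw [hB 0 j a b ha hb, zpow_zero, one_smul, one_smul]

lemma br10' {d : Y →ₗ[ℝ] Y} {Br : Y →ₗ[ℝ] Y →ₗ[ℝ] Y} (hB : IsBVBracketOf ℬ d Br)
    {j : ℤ} {a b : Y} (ha : a ∈ ℬ 1) (hb : b ∈ ℬ j) :
    Br a b = -(d (a * b)) + d a * b - a * d b := by
  rw [hB 1 j a b ha hb, zpow_one]; module

/-- Graded antisymmetry of the bracket against a degree-1 element. -/
lemma sym1' (hgc : GradedComm ℬ) {d : Y →ₗ[ℝ] Y} {Br : Y →ₗ[ℝ] Y →ₗ[ℝ] Y}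
    (hdeg : ∀ (i : ℤ) (f : Y), f ∈ ℬ i → d f ∈ ℬ (i + 1))
    (hB : IsBVBracketOf ℬ d Br)
    {k : ℤ} {a b : Y} (ha : a ∈ ℬ k) (hb : b ∈ ℬ 1) : Br a b = -(Br b a) := by
  have hda := hdeg k a ha
  have hdb : d b ∈ ℬ 2 := by simpa using hdeg 1 b hb
  have h1 := hgc k 1 a b ha hb; rw [mul_one] at h1
  have h2 := hgc (k+1) 1 (d a) b hda hb
  rw [mul_one, zpow_add₀ (by norm_num : (-1:ℝ) ≠ 0), zpow_one] at h2
  have h3 := hgc k 2 a (d b) ha hdb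
  rw [show (k*2) = k+k from by ring, Even.neg_one_zpow ⟨k, rfl⟩, one_smul] at h3
  rw [hB k 1 a b ha hb, hB 1 k b a hb ha, h1, h2, h3, zpow_one, map_smul]
  rcases Int.even_or_odd k with hk | hk
  · rw [Even.neg_one_zpow hk]; module
  · rw [Odd.neg_one_zpow hk]; module

/-- Symmetry of the bracket on two degree-0 elements. -/
lemma sym0' (hgc : GradedComm ℬ) {d : Y →ₗ[ℝ] Y} {Br : Y →ₗ[ℝ] Y →ₗ[ℝ] Y}
    (hdeg : ∀ (i : ℤ) (f : Y), f ∈ ℬ i → d f ∈ ℬ (i + 1))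
    (hB : IsBVBracketOf ℬ d Br)
    {a b : Y} (ha : a ∈ ℬ 0) (hb : b ∈ ℬ 0) : Br a b = Br b a := by
  have hda : d a ∈ ℬ 1 := by simpa using hdeg 0 a ha
  have hdb : d b ∈ ℬ 1 := by simpa using hdeg 0 b hb
  have h1 : a * b = b * a := comm0' hgc ha hb
  have h2 : a * d b = d b * a := comm0' hgc ha hdb
  have h3 : b * d a = d a * b := comm0' hgc hb hda
  rw [br00' hB ha hb, br00' hB hb ha, h1, h2, h3]
  abel

/-- The key lemma: the logarithmic Jacobian of a canonical map into a nonsingular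
BV algebra satisfies the quantum master equation. -/
lemma jacobian_master [GradedAlgebra ℬ]
    (hgc : GradedComm ℬ) (d : Y →ₗ[ℝ] Y) (Br : Y →ₗ[ℝ] Y →ₗ[ℝ] Y)
    (hL : IsBVLaplacian ℬ d) (hB : IsBVBracketOf ℬ d Br)
    (hY : IsNonsingularBracket Br) (r : Y) (hr : r ∈ ℬ 0)
    (hM : ∀ y : Y, Br r (Br r y) = -(d (Br r y)) - Br r (d y)) :
    d r + (1 / 2 : ℝ) • Br r r = 0 := by
  classical
  obtain ⟨hdeg, hseven, hd2, -⟩ := hL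
  have hdr1 : d r ∈ ℬ 1 := by simpa using hdeg 0 r hr
  have cdrr : d r * r = r * d r := (comm0' hgc hr hdr1).symm
  have hdrdr : d r * d r = 0 := by
    have h := hgc 1 1 (d r) (d r) hdr1 hdr1
    rw [show ((1:ℤ)*1) = 1 from by norm_num, zpow_one] at h
    have h2 : (2:ℝ) • (d r * d r) = 0 := by
      rw [two_smul]; linear_combination (norm := module) h
    have h3 := congrArg (fun z => (1/2:ℝ) • z) h2
    simpa [smul_smul] using h3
  have hrr : r * r ∈ ℬ 0 := by simpa using SetLike.mul_mem_graded hr hr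
  have hrdr : r * d r ∈ ℬ 1 := by simpa using SetLike.mul_mem_graded hr hdr1
  have h_w : Br r r = d (r*r) - d r * r - r * d r := br00' hB hr hr
  have hw : Br r r ∈ ℬ 1 := by
    rw [h_w]
    exact sub_mem (sub_mem (by simpa using hdeg 0 _ hrr)
      (by simpa using SetLike.mul_mem_graded hdr1 hr)) hrdr
  have hc'1 : Br r r + d r + d r ∈ ℬ 1 := add_mem (add_mem hw hdr1) hdr1
  -- the central computation, for homogeneous y
  have hbig : ∀ (j : ℤ) (y : Y), y ∈ ℬ j →
      Br (Br r r) y + (Br (d r) y + Br (d r) y) = 0 := by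
    intro j y hy
    have hdy : d y ∈ ℬ (j+1) := hdeg j y hy
    have hry : r * y ∈ ℬ j := by simpa using SetLike.mul_mem_graded hr hy
    have E5 : Br r y = d (r*y) - d r * y - r * d y := br00' hB hr hy
    have hu : Br r y ∈ ℬ (j+1) := by
      rw [E5]
      exact sub_mem (sub_mem (hdeg j _ hry)
        (by simpa [add_comm] using SetLike.mul_mem_graded hdr1 hy))
        (by simpa using SetLike.mul_mem_graded hr hdy)
    have hdu : d (Br r y) = -(d (d r * y)) - d (r * d y) := by
      rw [E5, map_sub, map_sub, hd2]; abel
    have hbdy : Br r (d y) = d (r * d y) - d r * d y := by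
      rw [br00' hB hr hdy, hd2, mul_zero, sub_zero]
    have E7 : Br r (Br r y) = d (d r * y) + d r * d y := by
      rw [hM y, hdu, hbdy]; abel
    have E6 : Br r (Br r y) = d (r * Br r y) - d r * Br r y - r * d (Br r y) :=
      br00' hB hr hu
    have h_dru : d r * Br r y = d r * d (r*y) - r * d r * d y := by
      linear_combination (norm := noncomm_ring) (d r) * E5 - hdrdr * y - cdrr * (d y)
    have h_rdu : r * d (Br r y) = -(r * d (d r * y)) - (r * d (r * d y)) := by
      rw [hdu]; noncomm_ring
    have E8 : d (r * Br r y) = Br r (Br r y) + d r * d (r*y) - r * d r * d y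
        - r * d (d r * y) - r * d (r * d y) := by
      linear_combination (norm := noncomm_ring) -E6 + h_dru + h_rdu
    have E9 : d (r * d (r*y)) = d (r * Br r y) + d (r * d r * y) + d (r * r * d y) := by
      have h : r * d (r * y) = r * Br r y + r * d r * y + r * r * d y := by
        linear_combination (norm := noncomm_ring) -(r * E5)
      rw [h, map_add, map_add]
    have E1 : d (r*r*y) = -(d r * r * y) - r * d r * y - r*r*d y
        + d (r*r) * y + r * d (r*y) + r * d (r*y) := by
      have h := hseven 0 0 j r r y hr hr hy
      norm_num at h
      linear_combination (norm := noncomm_ring) h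
    have E1' := congrArg (fun z => d z) E1
    simp only [map_add, map_sub, map_neg, hd2] at E1'
    have E3 : d (r*r*d y) = -(r * d r * d y) - (r * d r * d y) + d (r*r) * d y
        + (r * d (r * d y)) + (r * d (r * d y)) := by
      have h := hseven 0 0 (j+1) r r (d y) hr hr hdy
      rw [hd2, cdrr] at h
      norm_num at h
      linear_combination (norm := noncomm_ring) h
    have E4 : d (r * d r * y) = r * d r * d y + d (r * d r) * y - d r * d (r*y)
        + r * d (d r * y) := by
      have h := hseven 0 1 j r (d r) y hr hdr1 hy
      rw [hd2, hdrdr] at h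
      norm_num at h
      linear_combination (norm := noncomm_ring) h
    have h_Bw : Br (Br r r) y = -(d (Br r r * y)) + d (Br r r) * y - Br r r * d y :=
      br10' hB hw hy
    have h_c0 : Br r r * y = d (r*r) * y - d r * r * y - r * d r * y := by
      rw [h_w]; noncomm_ring
    have h_c1 : d (Br r r * y) = d (d (r*r) * y) - d (d r * r * y) - d (r * d r * y) := by
      rw [h_c0, map_sub, map_sub]
    have h_c3 : d (d r * r * y) = d (r * d r * y) := by rw [cdrr]
    have h_dw : d (Br r r) = -(d (r * d r)) - d (r * d r) := by
      rw [h_w, map_sub, map_sub, hd2, cdrr]; abel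
    have h_c2 : Br r r * d y = d (r*r) * d y - r * d r * d y - r * d r * d y := by
      rw [h_w, cdrr]; noncomm_ring
    have T5 : Br (Br r r) y = Br r (Br r y) + Br r (Br r y) := by
      linear_combination (norm := noncomm_ring) h_Bw - h_c1 + E1'
        + h_dw * y - h_c2 + 2 * E9 + E3 + 2 * E4 + 2 * E8
    have hBdr : Br (d r) y = -(d (d r * y)) - d r * d y := by
      rw [br10' hB hdr1 hy, hd2, zero_mul]; abel
    rw [T5, E7, hBdr]; abel
  -- pass to the nonsingularity statement
  have hky : ∀ (k : ℤ) (y : Y), y ∈ ℬ k → Br y (Br r r + d r + d r) = 0 := by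
    intro k y hyk
    have h1 : Br (Br r r + d r + d r) y = 0 := by
      have h := hbig k y hyk
      simp only [map_add, LinearMap.add_apply]
      linear_combination (norm := module) h
    rw [sym1' hgc hdeg hB hyk hc'1, h1, neg_zero]
  have hall : ∀ f : Y, Br f (Br r r + d r + d r) = 0 := by
    intro f
    conv_lhs => rw [← DirectSum.sum_support_decompose ℬ f]
    rw [map_sum, LinearMap.sum_apply]
    exact Finset.sum_eq_zero fun i _ => hky i _ (SetLike.coe_mem _)
  obtain ⟨ρ, hρ⟩ := (hY _).mp hall
  have h0 : Br r r + d r + d r ∈ ℬ 0 := hρ ▸ SetLike.algebraMap_mem_graded ℬ ρ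
  have hz : Br r r + d r + d r = 0 := by
    have hne := DirectSum.decompose_of_mem_ne ℬ hc'1 (by norm_num : (1:ℤ) ≠ 0)
    have hsame := DirectSum.decompose_of_mem_same ℬ h0
    rw [hne] at hsame
    simpa using hsame.symm
  linear_combination (norm := module) (1/2:ℝ) • hz

end Helpers

/-- the α-transform `α̂S = α(S) + r_α` of a master action is a
degree-0 solution of the quantum master equation in `Y`. -/
theorem stmt16 {X Y : Type*} [Ring X] [Algebra ℝ X] [Ring Y] [Algebra ℝ Y]
    (𝒜 : ℤ → Submodule ℝ X) [GradedAlgebra 𝒜]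
    (ℬ : ℤ → Submodule ℝ Y) [GradedAlgebra ℬ]
    (BX : BVAlgebraStr X 𝒜) (BY : BVAlgebraStr Y ℬ)
    (hX : IsNonsingularBracket BX.bracket) (hY : IsNonsingularBracket BY.bracket)
    (α : X ≃ₐ[ℝ] Y) (r : Y)
    (hcan : IsCanonicalWithJacobian 𝒜 ℬ BX.Δ BY.Δ BY.bracket α r)
    (S : X) (hS : IsMasterAction BX S) :
    (α S + r) ∈ ℬ 0 ∧
    BY.Δ (α S + r) + (1 / 2 : ℝ) • BY.bracket (α S + r) (α S + r) = 0 := by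
  obtain ⟨hαdeg, hr0, hcan3⟩ := hcan
  obtain ⟨hS0, hSQ⟩ := hS
  have hT0 : α S ∈ ℬ 0 := hαdeg 0 S hS0
  refine ⟨add_mem hT0 hr0, ?_⟩
  -- the canonical-map identity, for all elements of Y
  have hA : ∀ y : Y, α (BX.Δ (α.symm y)) = BY.Δ y + BY.bracket r y := by
    intro y
    have h := hcan3 (α.symm y)
    rw [AlgEquiv.apply_symm_apply] at h
    linear_combination (norm := module) -h
  have hM' : ∀ y : Y, BY.bracket r (BY.bracket r y)
      = -(BY.Δ (BY.bracket r y)) - BY.bracket r (BY.Δ y) := by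
    intro y
    have h2 := hA (BY.Δ y + BY.bracket r y)
    rw [← hA y, AlgEquiv.symm_apply_apply, BX.isBVLaplacian.2.2.1, map_zero, hA y] at h2
    simp only [map_add] at h2
    rw [BY.isBVLaplacian.2.2.1 y] at h2
    linear_combination (norm := module) -h2
  -- the logarithmic Jacobian satisfies the master equation
  have hrm : BY.Δ r + (1/2:ℝ) • BY.bracket r r = 0 :=
    jacobian_master BY.grcomm BY.Δ BY.bracket BY.isBVLaplacian BY.isBracket hY r hr0 hM'
  -- degree bookkeeping
  have hdegY := BY.isBVLaplacian.1
  have hdr1 : BY.Δ r ∈ ℬ 1 := by simpa using hdegY 0 r hr0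
  have hdT : BY.Δ (α S) ∈ ℬ 1 := by simpa using hdegY 0 _ hT0
  have hTT0 : α S * α S ∈ ℬ 0 := by simpa using SetLike.mul_mem_graded hT0 hT0
  have hrT0 : r * α S ∈ ℬ 0 := by simpa using SetLike.mul_mem_graded hr0 hT0
  have hdXS : BX.Δ S ∈ 𝒜 1 := by simpa using BX.isBVLaplacian.1 0 S hS0
  -- bracket formulas
  have g4 : BY.bracket r (α S) = BY.Δ (r * α S) - BY.Δ r * α S - r * BY.Δ (α S) :=
    br00' BY.isBracket hr0 hT0
  have hBrrT1 : BY.bracket r (α S) ∈ ℬ 1 := by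
    rw [g4]
    exact sub_mem (sub_mem (by simpa using hdegY 0 _ hrT0)
      (by simpa using SetLike.mul_mem_graded hdr1 hT0))
      (by simpa using SetLike.mul_mem_graded hr0 hdT)
  have hBrTT : BY.bracket (α S) (α S)
      = BY.Δ (α S * α S) - BY.Δ (α S) * α S - α S * BY.Δ (α S) :=
    br00' BY.isBracket hT0 hT0
  have hSS : BX.bracket S S = BX.Δ (S*S) - BX.Δ S * S - S * BX.Δ S :=
    br00' BX.isBracket hS0 hS0
  have hcanS : BY.Δ (α S) - α (BX.Δ S) + BY.bracket r (α S) = 0 := hcan3 S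
  have hcanSS : BY.Δ (α S * α S) - α (BX.Δ (S*S)) + BY.bracket r (α S * α S) = 0 := by
    have h := hcan3 (S*S); rwa [map_mul] at h
  -- Leibniz instance
  have c1 : α S * BY.Δ (α S) = BY.Δ (α S) * α S := comm0' BY.grcomm hT0 hdT
  have c2 : α S * BY.Δ r = BY.Δ r * α S := comm0' BY.grcomm hT0 hdr1
  have c3 : α S * r = r * α S := comm0' BY.grcomm hT0 hr0
  have c4 : α S * BY.Δ (r * α S) = BY.Δ (r * α S) * α S :=
    comm0' BY.grcomm hT0 (by simpa using hdegY 0 _ hrT0)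
  have c5 : α S * BY.bracket r (α S) = BY.bracket r (α S) * α S :=
    comm0' BY.grcomm hT0 hBrrT1
  have g1 : BY.bracket r (α S * α S) = BY.Δ (r * (α S * α S))
      - BY.Δ r * (α S * α S) - r * BY.Δ (α S * α S) :=
    br00' BY.isBracket hr0 hTT0
  have g3 : BY.Δ (r * (α S * α S)) = BY.Δ (r * α S * α S) :=
    (congrArg _ (mul_assoc r (α S) (α S))).symm
  have g2 : BY.Δ (r * α S * α S) = -(BY.Δ r * α S * α S) - r * BY.Δ (α S) * α S
      - r * α S * BY.Δ (α S) + BY.Δ (r * α S) * α S + α S * BY.Δ (r * α S)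
      + r * BY.Δ (α S * α S) := by
    have h := BY.isBVLaplacian.2.1 0 0 0 r (α S) (α S) hr0 hT0 hT0
    norm_num at h
    linear_combination (norm := noncomm_ring) h
  have hLeib : BY.bracket r (α S * α S)
      = α S * BY.bracket r (α S) + α S * BY.bracket r (α S) := by
    linear_combination (norm := noncomm_ring) g1 + g3 + g2 + r * c1 - c4
      - 2 * (α S * g4) + 2 * (c2 * α S) + 2 * (c3 * BY.Δ (α S))
  -- transport of the bracket
  have a5 : α (BX.bracket S S) = α (BX.Δ (S*S)) - α (BX.Δ S) * α S - α S * α (BX.Δ S) := by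
    rw [hSS]; simp only [map_sub, map_mul]
  have hBrTTα : BY.bracket (α S) (α S) = α (BX.bracket S S) := by
    linear_combination (norm := noncomm_ring) hBrTT + hcanSS - hLeib
      - hcanS * α S - α S * hcanS - c5 - a5
  -- the master equation for S, transported
  have hQ : α (BX.Δ S) + (1/2:ℝ) • α (BX.bracket S S) = 0 := by
    have h := congrArg α hSQ
    simp only [map_add, map_smul, map_zero] at h
    exact h
  have hmain : BY.Δ (α S) + (1/2:ℝ) • BY.bracket (α S) (α S) + BY.bracket r (α S) = 0 := by
    linear_combination (norm := module) hcanS + (1/2:ℝ) • hBrTTα + hQ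
  have hsymTr : BY.bracket (α S) r = BY.bracket r (α S) :=
    sym0' BY.grcomm hdegY BY.isBracket hT0 hr0
  simp only [map_add, LinearMap.add_apply]
  linear_combination (norm := module) hmain + hrm + (1/2:ℝ) • hsymTr
end

section
/- Let X and Y be nonsingular BV algebras, let α : X → Y be a canonical map with logarithmic Jacobian r_α, let S be a BV quantum master action of X, and set α̂S = α(S) + r_α. Then the variation operators transform covariantly: Δ_{Y,α̂S} = α ∘ Δ_{X,S} ∘ α⁻¹, where Δ_{X,S}f = Δ_X f + (S,f)_X and Δ_{Y,α̂S}g = Δ_Y g + (α̂S, g)_Y. -/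
section Aux

variable {Y : Type*} [Ring Y] [Algebra ℝ Y] {ℬ : ℤ → Submodule ℝ Y}

/-- Leibniz rule for the bracket with a degree-0 first argument and a degree-0
first factor. -/
lemma bracket_leibniz0 [GradedAlgebra ℬ] (B : BVAlgebraStr Y ℬ) {r u v : Y} {k : ℤ}
    (hr : r ∈ ℬ 0) (hu : u ∈ ℬ 0) (hv : v ∈ ℬ k) :
    B.bracket r (u * v) = B.bracket r u * v + u * B.bracket r v := by
  obtain ⟨hdeg, h7, -, -⟩ := B.isBVLaplacian
  have huv : u * v ∈ ℬ k := by simpa using SetLike.mul_mem_graded hu hv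
  have e1 := B.isBracket 0 k r (u * v) hr huv
  have e2 := B.isBracket 0 0 r u hr hu
  have e3 := B.isBracket 0 k r v hr hv
  have e7 := h7 0 0 k r u v hr hu hv
  have hc1 : u * B.Δ r = B.Δ r * u := by
    have := B.grcomm 0 1 u (B.Δ r) hu (by simpa using hdeg 0 r hr)
    simpa using this
  have hc2 : u * r = r * u := by
    have := B.grcomm 0 0 u r hu hr
    simpa using this
  norm_num at e1 e2 e3 e7
  rw [← mul_assoc r u v] at e1
  rw [e1, e2, e3, e7]
  simp only [sub_mul, mul_sub, ← mul_assoc, hc1, hc2]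
  abel

end Aux

section Aux2

variable {X Y : Type*} [Ring X] [Algebra ℝ X] [Ring Y] [Algebra ℝ Y]
  {𝒜 : ℤ → Submodule ℝ X} {ℬ : ℤ → Submodule ℝ Y}

lemma stmt17_homog [GradedAlgebra ℬ] (BX : BVAlgebraStr X 𝒜) (BY : BVAlgebraStr Y ℬ)
    (α : X ≃ₐ[ℝ] Y) (r : Y)
    (hcan : IsCanonicalWithJacobian 𝒜 ℬ BX.Δ BY.Δ BY.bracket α r)
    (S : X) (hS0 : S ∈ 𝒜 0) {j : ℤ} {f : X} (hf : f ∈ 𝒜 j) :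
    BY.Δ (α f) + BY.bracket (α S + r) (α f)
      = α (BX.Δ f + BX.bracket S f) := by
  obtain ⟨hdegα, hr0, hΔ⟩ := hcan
  have hαS : α S ∈ ℬ 0 := hdegα 0 S hS0
  have hαf : α f ∈ ℬ j := hdegα j f hf
  -- the canonical-map identity, rearranged
  have key : ∀ x : X, BY.Δ (α x) = α (BX.Δ x) - BY.bracket r (α x) := by
    intro x
    have h := hΔ x
    rw [sub_add_eq_add_sub, sub_eq_zero] at h
    exact eq_sub_of_add_eq h
  have hSf : α S * α f = α (S * f) := (map_mul α S f).symm
  have eB := BY.isBracket 0 j (α S) (α f) hαS hαf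
  have eX := BX.isBracket 0 j S f hS0 hf
  norm_num at eB eX
  have hLeib := bracket_leibniz0 BY hr0 hαS hαf
  have hBr : BY.bracket (α S) (α f) = α (BX.bracket S f) := by
    rw [eB, eX, hSf, key (S * f), key S, key f, ← hSf, hLeib]
    simp only [map_sub, map_mul, sub_mul, mul_sub]
    abel
  have hadd : BY.bracket (α S + r) (α f)
      = BY.bracket (α S) (α f) + BY.bracket r (α f) := by
    rw [map_add, LinearMap.add_apply]
  rw [hadd, hBr, key f, map_add]
  abel

end Aux2

/-- the variation operators transform covariantly:
`Δ_{Y,α̂S} = α ∘ Δ_{X,S} ∘ α⁻¹`. -/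
theorem stmt17 {X Y : Type*} [Ring X] [Algebra ℝ X] [Ring Y] [Algebra ℝ Y]
    (𝒜 : ℤ → Submodule ℝ X) [GradedAlgebra 𝒜]
    (ℬ : ℤ → Submodule ℝ Y) [GradedAlgebra ℬ]
    (BX : BVAlgebraStr X 𝒜) (BY : BVAlgebraStr Y ℬ)
    (hX : IsNonsingularBracket BX.bracket) (hY : IsNonsingularBracket BY.bracket)
    (α : X ≃ₐ[ℝ] Y) (r : Y)
    (hcan : IsCanonicalWithJacobian 𝒜 ℬ BX.Δ BY.Δ BY.bracket α r)
    (S : X) (hS : IsMasterAction BX S) :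
    ∀ g : Y, BY.Δ g + BY.bracket (α S + r) g
      = α (BX.Δ (α.symm g) + BX.bracket S (α.symm g)) := by
  suffices h : ∀ f : X, ((BY.Δ + BY.bracket (α S + r)).comp α.toLinearMap) f
      = (α.toLinearMap.comp (BX.Δ + BX.bracket S)) f by
    intro g
    have h2 := h (α.symm g)
    simpa [LinearMap.add_apply, LinearMap.comp_apply] using h2
  intro f
  induction f using DirectSum.Decomposition.inductionOn 𝒜 with
  | zero => simp
  | homogeneous m =>
      simp only [LinearMap.comp_apply, LinearMap.add_apply,
        AlgEquiv.toLinearMap_apply]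
      exact stmt17_homog BX BY α r hcan S hS.1 m.2
  | add a b ha hb => rw [LinearMap.map_add _ a b, LinearMap.map_add _ a b, ha, hb]
end

section
/- Let X be a nonsingular BV algebra, let ξ be an infinitesimal canonical map of X with logarithmic Jacobian e_ξ, and let S be a BV quantum master action of X. Then the ξ-variation δ̂_ξS = ξ(S) + e_ξ is a 0-cocycle of the variation operator Δ_{XS}: Δ_X(δ̂_ξS) + (S, δ̂_ξS)_X = 0. -/
/-- the ξ-variation `δ̂_ξ S = ξ(S) + e_ξ` of a master action is a
0-cocycle of its variation operator. -/
theorem stmt18 {X : Type*} [Ring X] [Algebra ℝ X]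
    (𝒜 : ℤ → Submodule ℝ X) [GradedAlgebra 𝒜] (B : BVAlgebraStr X 𝒜)
    (hX : IsNonsingularBracket B.bracket)
    (ξ : X →ₗ[ℝ] X) (e : X) (hξ : IsInfCanonicalWithJacobian B ξ e)
    (S : X) (hS : IsMasterAction B S) :
    B.Δ (ξ S + e) + B.bracket S (ξ S + e) = 0 := by
  classical
  obtain ⟨hξdeg, hξder, he0, hξcan⟩ := hξ
  obtain ⟨hS0, hSme⟩ := hS
  obtain ⟨hdeg, hsecond, hsq, hone⟩ := B.isBVLaplacian
  have hne : (-1 : ℝ) ≠ 0 := by norm_num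
  -- degree-raising in convenient form
  have hmem1 : ∀ {f : X}, f ∈ 𝒜 0 → B.Δ f ∈ 𝒜 1 := by
    intro f hf
    simpa using hdeg 0 f hf
  -- canonical relation rearranged
  have hcan : ∀ f : X, ξ (B.Δ f) = B.Δ (ξ f) + B.bracket e f := by
    intro f
    have h := hξcan f
    rw [sub_add_eq_add_sub, sub_eq_zero] at h
    exact h.symm
  -- Step A : Δ e = 0
  have hΔe1 : B.Δ e ∈ 𝒜 1 := hmem1 he0
  have hbrzero : ∀ f : X, B.bracket f (B.Δ e) = 0 := by
    have hhom : ∀ (i : ℤ) (f : X), f ∈ 𝒜 i → B.bracket f (B.Δ e) = 0 := by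
      intro i f hf
      have hDf : B.Δ f ∈ 𝒜 (i + 1) := hdeg i f hf
      -- key : Δ(Br e f) + Br e (Δ f) = 0
      have key : B.Δ (B.bracket e f) + B.bracket e (B.Δ f) = 0 := by
        have h1 := congrArg B.Δ (hcan f)
        rw [map_add, hsq] at h1
        have h2 := hcan (B.Δ f)
        rw [hsq, map_zero] at h2
        rw [h1] at h2
        rw [zero_add] at h2
        exact h2.symm
      have hbef := B.isBracket 0 i e f he0 hf
      simp only [zpow_zero, one_smul] at hbef
      have hbeDf := B.isBracket 0 (i + 1) e (B.Δ f) he0 hDf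
      simp only [zpow_zero, one_smul] at hbeDf
      rw [hsq, mul_zero, sub_zero] at hbeDf
      rw [hbef, hbeDf, map_sub, map_sub, hsq] at key
      -- key : (0 - Δ(Δe * f) - Δ(e * Δf)) + (Δ(e * Δf) - Δe * Δf) = 0
      have hkey2 : B.Δ (B.Δ e * f) = -(B.Δ e * B.Δ f) := by
        have h3 : B.Δ (B.Δ e * f) + B.Δ e * B.Δ f = 0 := by
          linear_combination (norm := abel) -key
        exact add_eq_zero_iff_eq_neg.mp h3
      have hBrfΔe := B.isBracket i 1 f (B.Δ e) hf hΔe1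
      rw [hsq, mul_zero, smul_zero, sub_zero] at hBrfΔe
      have hc1 := B.grcomm i 1 f (B.Δ e) hf hΔe1
      have hc2 := B.grcomm (i + 1) 1 (B.Δ f) (B.Δ e) hDf hΔe1
      rw [mul_one] at hc1 hc2
      rw [hBrfΔe, hc1, hc2, map_smul, hkey2, zpow_add_one₀ hne]
      simp [smul_smul, mul_comm, sub_eq_zero, mul_assoc]
    intro f
    conv_lhs => rw [← DirectSum.sum_support_decompose 𝒜 f]
    rw [map_sum, LinearMap.coe_sum, Finset.sum_apply]
    exact Finset.sum_eq_zero fun i _ => hhom i _ (DirectSum.decompose 𝒜 f i).2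
  have hΔe0mem : B.Δ e ∈ 𝒜 0 := by
    obtain ⟨r, hr⟩ := (hX (B.Δ e)).mp hbrzero
    rw [hr]
    exact SetLike.algebraMap_mem_graded 𝒜 r
  have hΔe : B.Δ e = 0 := by
    have h1 := DirectSum.decompose_of_mem_same 𝒜 hΔe1
    have h2 := DirectSum.decompose_of_mem_ne 𝒜 hΔe0mem (by norm_num : (0 : ℤ) ≠ 1)
    rw [h2] at h1
    exact h1.symm
  -- memberships
  have hξS0 : ξ S ∈ 𝒜 0 := hξdeg 0 S hS0
  have hΔS1 : B.Δ S ∈ 𝒜 1 := hmem1 hS0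
  have hΔξS1 : B.Δ (ξ S) ∈ 𝒜 1 := hmem1 hξS0
  have heS0 : e * S ∈ 𝒜 0 := by simpa using SetLike.mul_mem_graded he0 hS0
  have hSS0 : S * S ∈ 𝒜 0 := by simpa using SetLike.mul_mem_graded hS0 hS0
  have heΔS1 : e * B.Δ S ∈ 𝒜 1 := by simpa using SetLike.mul_mem_graded he0 hΔS1
  have hΔeS1 : B.Δ (e * S) ∈ 𝒜 1 := hmem1 heS0
  -- bracket expansions (all signs are 1)
  have hBreS : B.bracket e S = B.Δ (e * S) - e * B.Δ S := by
    have h := B.isBracket 0 0 e S he0 hS0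
    simp only [zpow_zero, one_smul] at h
    rw [h, hΔe, zero_mul, sub_zero]
  have hBreS1 : B.bracket e S ∈ 𝒜 1 := by
    rw [hBreS]; exact sub_mem hΔeS1 heΔS1
  have hBrSe : B.bracket S e = B.Δ (e * S) - e * B.Δ S := by
    have h := B.isBracket 0 0 S e hS0 he0
    simp only [zpow_zero, one_smul] at h
    have hc1 := B.grcomm 0 0 S e hS0 he0
    have hc2 := B.grcomm 1 0 (B.Δ S) e hΔS1 he0
    simp only [mul_zero, zero_mul, zpow_zero, one_smul] at hc1 hc2
    rw [h, hΔe, mul_zero, sub_zero, hc1, hc2]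
  have hBrSS : B.bracket S S = B.Δ (S * S) - B.Δ S * S - S * B.Δ S := by
    have h := B.isBracket 0 0 S S hS0 hS0
    simpa only [zpow_zero, one_smul] using h
  have hBrSxiS : B.bracket S (ξ S)
      = B.Δ (S * ξ S) - B.Δ S * ξ S - S * B.Δ (ξ S) := by
    have h := B.isBracket 0 0 S (ξ S) hS0 hξS0
    simpa only [zpow_zero, one_smul] using h
  -- commutations
  have hcSxiS : ξ S * S = S * ξ S := by
    have := B.grcomm 0 0 (ξ S) S hξS0 hS0
    simpa using this
  have hcΔSS : B.Δ S * S = S * B.Δ S := by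
    have := B.grcomm 1 0 (B.Δ S) S hΔS1 hS0
    simpa using this
  have hcΔSxiS : B.Δ S * ξ S = ξ S * B.Δ S := by
    have := B.grcomm 1 0 (B.Δ S) (ξ S) hΔS1 hξS0
    simpa using this
  have hcΔxiSS : B.Δ (ξ S) * S = S * B.Δ (ξ S) := by
    have := B.grcomm 1 0 (B.Δ (ξ S)) S hΔξS1 hS0
    simpa using this
  have hcqS : B.bracket e S * S = S * B.bracket e S := by
    have := B.grcomm 1 0 (B.bracket e S) S hBreS1 hS0
    simpa using this
  have hceS : e * S = S * e := by
    have := B.grcomm 0 0 e S he0 hS0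
    simpa using this
  have hcΔeSS : B.Δ (e * S) * S = S * B.Δ (e * S) := by
    have := B.grcomm 1 0 (B.Δ (e * S)) S hΔeS1 hS0
    simpa using this
  have hceΔSS : e * B.Δ S * S = S * (e * B.Δ S) := by
    have := B.grcomm 1 0 (e * B.Δ S) S heΔS1 hS0
    simpa using this
  -- derivation property of (e, ·) on S*S
  have hr2 : B.bracket e (S * S) = S * B.bracket e S + S * B.bracket e S := by
    have h := B.isBracket 0 0 e (S * S) he0 hSS0
    simp only [zpow_zero, one_smul] at h
    rw [hΔe, zero_mul, sub_zero] at h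
    have h7 := hsecond 0 0 0 e S S he0 hS0 hS0
    simp only [zpow_zero, zero_add, one_smul, mul_zero] at h7
    rw [hΔe, zero_mul, zero_mul, neg_zero] at h7
    -- h7 : Δ(e*S*S) = 0 - e*ΔS*S - e*S*ΔS + Δ(e*S)*S + S*Δ(e*S) + e*Δ(S*S)
    have hassoc : e * (S * S) = e * S * S := (mul_assoc e S S).symm
    rw [h, hassoc, h7, hBreS, hcΔeSS, hceΔSS]
    have h8 : e * S * B.Δ S = S * (e * B.Δ S) := by
      rw [hceS, mul_assoc]
    rw [h8, mul_sub]
    abel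
  -- master equation rearranged: Br S S = -(ΔS + ΔS)
  have hm : B.bracket S S = -(B.Δ S + B.Δ S) := by
    have h2 : B.bracket S S = (2 : ℝ) • ((1 / 2 : ℝ) • B.bracket S S) := by
      rw [smul_smul]; norm_num
    rw [h2, eq_neg_of_add_eq_zero_right hSme, smul_neg, two_smul]
  -- apply ξ to the master equation
  have hEqA := congrArg ξ hm
  rw [hBrSS, map_sub, map_sub, map_neg, map_add] at hEqA
  rw [hcan (S * S), hcan S, hξder S S, hξder (B.Δ S) S, hξder S (B.Δ S),
      hcan S] at hEqA
  rw [map_add, add_mul, mul_add] at hEqA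
  -- hEqA now in atoms
  rw [hcSxiS, hcΔxiSS, hcqS, hcΔSxiS, hr2] at hEqA
  -- hEqA :
  --   (Δ(S*ξS) + Δ(S*ξS)) + (S*q + S*q) - (S*ΔξS + S*q + ξS*ΔS)
  --     - (ξS*ΔS + (S*ΔξS + S*q)) = -((ΔξS + q) + (ΔξS + q))
  -- goal rewriting
  rw [map_add, map_add, hΔe, hBrSxiS, hBrSe, ← hBreS]
  -- goal : ΔξS + 0 + ((Δ(S*ξS) - ΔS*ξS - S*ΔξS) + Br e S) = 0
  rw [hcΔSxiS]
  rw [add_zero]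
  have h2 : (2 : ℝ) • (B.Δ (ξ S) + (B.Δ (S * ξ S) - ξ S * B.Δ S - S * B.Δ (ξ S)
      + B.bracket e S)) = 0 := by
    rw [two_smul]
    linear_combination (norm := abel) hEqA
  have h3 := congrArg (fun x : X => (2⁻¹ : ℝ) • x) h2
  simp only [smul_smul, smul_zero] at h3
  norm_num at h3
  exact h3
end
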